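/- arXiv:1501.07376 — 4 statements merged into one kernel-verified Lean document; each statement's English description precedes it below -/
import Mathlib

section
/- Let M be an n×n Hermitian positive semidefinite complex matrix that is β-banded and whose spectrum is contained in [0, 4ρ] for some ρ > 0, and let τ > 0. Then for all indices k ≠ t with ρτ ≥ 1 and √(4ρτ) ≤ |k−t|/β ≤ 2ρτ, the entries of the matrix exponential satisfy |(exp(−τM))_{kt}| ≤ 10·exp( −(|k−t|/β)² / (5ρτ) ). -/
open Polynomial Finset

lemma natDegree_chebyshevT_le : ∀ (N : ℕ), ((Polynomial.Chebyshev.T ℝ N).natDegree ≤ N)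
  | 0 => by simp
  | 1 => by simp
  | (N+2) => by
    have h1 := natDegree_chebyshevT_le (N+1)
    have h0 := natDegree_chebyshevT_le N
    have : ((N+2 : ℕ) : ℤ) = (N : ℤ) + 2 := by push_cast; ring
    rw [this, Polynomial.Chebyshev.T_add_two]
    refine le_trans (natDegree_sub_le _ _) ?_
    have hm : (2 * X * Polynomial.Chebyshev.T ℝ ((N:ℤ)+1)).natDegree ≤ N + 2 := by
      refine le_trans (natDegree_mul_le) ?_
      have : (2 * X : ℝ[X]).natDegree ≤ 1 := le_trans natDegree_mul_le (by simp)
      have h1' : (Polynomial.Chebyshev.T ℝ ((N:ℤ)+1)).natDegree ≤ N + 1 := by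
        have : ((N+1 : ℕ) : ℤ) = (N : ℤ) + 1 := by push_cast; ring
        rw [← this]; exact h1
      omega
    simp only [max_le_iff]
    exact ⟨hm, le_trans h0 (by omega)⟩

lemma cos_pow_expand (m : ℕ) (θ : ℝ) :
    (Real.cos θ) ^ m * 2 ^ m =
      ∑ j ∈ Finset.range (m+1), (m.choose j : ℝ) * Real.cos ((2*(j:ℤ) - m) * θ) := by
  have key : ((2:ℂ) * Complex.cos θ) ^ m =
      ∑ j ∈ Finset.range (m+1), (m.choose j : ℂ) *
        Complex.exp ((2*(j:ℤ) - m) * θ * Complex.I) := by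
    have h2c : (2:ℂ) * Complex.cos θ = Complex.exp (θ * Complex.I) +
        Complex.exp (-θ * Complex.I) := by
      rw [Complex.cos]; ring
    rw [h2c, add_pow]
    refine Finset.sum_congr rfl fun j hj => ?_
    rw [← Complex.exp_nat_mul, ← Complex.exp_nat_mul, ← Complex.exp_add]
    rw [Finset.mem_range, Nat.lt_succ_iff] at hj
    rw [mul_comm]
    congr 1
    push_cast [hj]
    ring
  have h2c' : ((2:ℂ) * Complex.cos θ) ^ m = (((Real.cos θ ^ m * 2 ^ m : ℝ)) : ℂ) := by
    rw [← Complex.ofReal_cos]; push_cast; ring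
  rw [h2c'] at key
  have := congrArg Complex.re key
  rw [Complex.ofReal_re, Complex.re_sum] at this
  rw [this]
  refine Finset.sum_congr rfl fun j hj => ?_
  have : (2 * (((j:ℕ):ℤ):ℂ) - ((m:ℕ):ℂ)) * (θ:ℂ) * Complex.I =
      ((((2*(j:ℤ) - m : ℤ) : ℝ) * θ : ℝ) : ℂ) * Complex.I := by
    push_cast; ring
  rw [this]
  simp only [Complex.exp_ofReal_mul_I_re, Complex.re_ofNat, Complex.mul_re,
    Complex.natCast_re, Complex.natCast_im, Complex.ofReal_re]
  push_cast
  ring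

open Finset

lemma binom_half_tail (m d : ℕ) (r : ℝ) (hr : 1 ≤ r) :
    ∑ j ∈ Finset.range (m+1), (if (d:ℤ) ≤ (m:ℤ) - 2*j then (m.choose j : ℝ) else 0)
      ≤ (r + r⁻¹)^m / r^d := by
  have hr0 : (0:ℝ) < r := lt_of_lt_of_le one_pos hr
  have key : ∀ j ∈ Finset.range (m+1),
      (if (d:ℤ) ≤ (m:ℤ) - 2*j then (m.choose j : ℝ) else 0)
        ≤ (m.choose j : ℝ) * ((r⁻¹)^j * r^(m-j)) / r^d := by
    intro j hj
    rw [Finset.mem_range, Nat.lt_succ_iff] at hj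
    split_ifs with h
    · have e : r^(m-j) = r^(m-j-j) * r^j := by rw [← pow_add]; congr 1; omega
      have hpow : r^d ≤ (r⁻¹)^j * r^(m-j) := by
        calc r^d ≤ r^(m-j-j) := pow_le_pow_right₀ hr (by omega)
          _ = (r⁻¹)^j * r^(m-j) := by rw [e, inv_pow]; field_simp
      have h1 : (1:ℝ) ≤ ((r⁻¹)^j * r^(m-j)) / r^d := (one_le_div (by positivity)).2 hpow
      rw [mul_div_assoc]
      nth_rewrite 1 [← mul_one ((m.choose j : ℝ))]
      exact mul_le_mul_of_nonneg_left h1 (by positivity)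
    · positivity
  calc ∑ j ∈ Finset.range (m+1), (if (d:ℤ) ≤ (m:ℤ) - 2*j then (m.choose j : ℝ) else 0)
      ≤ ∑ j ∈ Finset.range (m+1), (m.choose j : ℝ) * ((r⁻¹)^j * r^(m-j)) / r^d :=
        Finset.sum_le_sum key
    _ = (∑ j ∈ Finset.range (m+1), (r⁻¹)^j * r^(m-j) * (m.choose j : ℝ)) / r^d := by
        rw [← Finset.sum_div]; congr 1; refine Finset.sum_congr rfl fun j hj => ?_; ring
    _ = (r⁻¹ + r)^m / r^d := by rw [add_pow]
    _ = (r + r⁻¹)^m / r^d := by rw [add_comm]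

lemma binom_abs_tail (m d : ℕ) (r : ℝ) (hr : 1 ≤ r) :
    ∑ j ∈ Finset.range (m+1), (if (d:ℤ) ≤ |2*(j:ℤ) - m| then (m.choose j : ℝ) else 0)
      ≤ 2 * ((r + r⁻¹)^m / r^d) := by
  have hsplit : ∀ j ∈ Finset.range (m+1),
      (if (d:ℤ) ≤ |2*(j:ℤ) - m| then (m.choose j : ℝ) else 0)
        ≤ (if (d:ℤ) ≤ (m:ℤ) - 2*j then (m.choose j : ℝ) else 0)
          + (if (d:ℤ) ≤ (m:ℤ) - 2*((m-j : ℕ):ℤ) then (m.choose (m-j) : ℝ) else 0) := by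
    intro j hj
    rw [Finset.mem_range, Nat.lt_succ_iff] at hj
    have hc : (m:ℤ) - 2*((m - j : ℕ):ℤ) = 2*(j:ℤ) - m := by
      have : ((m - j : ℕ):ℤ) = (m:ℤ) - j := by omega
      rw [this]; ring
    rw [hc, Nat.choose_symm hj]
    by_cases h : (d:ℤ) ≤ |2*(j:ℤ) - m|
    · rw [if_pos h]
      rcases le_abs.mp h with h' | h'
      · rw [if_pos h']
        have : (0:ℝ) ≤ (if (d:ℤ) ≤ (m:ℤ) - 2*j then (m.choose j : ℝ) else 0) := by positivity
        linarith
      · rw [if_pos (by linarith : (d:ℤ) ≤ (m:ℤ) - 2*j)]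
        have : (0:ℝ) ≤ (if (d:ℤ) ≤ 2*(j:ℤ) - m then (m.choose j : ℝ) else 0) := by positivity
        linarith
    · rw [if_neg h]; positivity
  have hrefl : ∑ j ∈ Finset.range (m+1),
      (if (d:ℤ) ≤ (m:ℤ) - 2*((m-j : ℕ):ℤ) then (m.choose (m-j) : ℝ) else 0)
      = ∑ j ∈ Finset.range (m+1),
      (if (d:ℤ) ≤ (m:ℤ) - 2*(j:ℤ) then (m.choose j : ℝ) else 0) := by
    rw [← Finset.sum_range_reflect]
    refine Finset.sum_congr rfl fun j hj => ?_
    rw [Finset.mem_range, Nat.lt_succ_iff] at hj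
    congr 2 <;> [skip; skip] <;> congr 1 <;> omega
  calc ∑ j ∈ Finset.range (m+1), (if (d:ℤ) ≤ |2*(j:ℤ) - m| then (m.choose j : ℝ) else 0)
      ≤ ∑ j ∈ Finset.range (m+1), ((if (d:ℤ) ≤ (m:ℤ) - 2*j then (m.choose j : ℝ) else 0)
          + (if (d:ℤ) ≤ (m:ℤ) - 2*((m-j : ℕ):ℤ) then (m.choose (m-j) : ℝ) else 0)) :=
        Finset.sum_le_sum hsplit
    _ = (∑ j ∈ Finset.range (m+1), (if (d:ℤ) ≤ (m:ℤ) - 2*j then (m.choose j : ℝ) else 0))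
        + ∑ j ∈ Finset.range (m+1),
            (if (d:ℤ) ≤ (m:ℤ) - 2*((m-j : ℕ):ℤ) then (m.choose (m-j) : ℝ) else 0) :=
        Finset.sum_add_distrib
    _ ≤ (r + r⁻¹)^m / r^d + (r + r⁻¹)^m / r^d := by
        rw [hrefl]
        have := binom_half_tail m d r hr
        exact add_le_add this this
    _ = 2 * ((r + r⁻¹)^m / r^d) := by ring

open Matrix

variable {n : ℕ}

lemma conj_pow_eq (U A : Matrix (Fin n) (Fin n) ℂ) (hU : star U * U = 1)
    (hU' : U * star U = 1) (m : ℕ) :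
    (U * A * star U) ^ m = U * A ^ m * star U := by
  induction m with
  | zero => simpa using hU'.symm
  | succ m ih =>
    rw [pow_succ, ih, pow_succ]
    calc U * A ^ m * star U * (U * A * star U)
        = U * A ^ m * (star U * U) * A * star U := by noncomm_ring
      _ = U * (A ^ m * A) * star U := by rw [hU]; noncomm_ring

lemma conj_diag_entry (U : Matrix (Fin n) (Fin n) ℂ) (w : Fin n → ℂ) (k t : Fin n) :
    (U * diagonal w * star U) k t = ∑ i, U k i * w i * (starRingEnd ℂ) (U t i) := by
  rw [Matrix.mul_apply]
  refine Finset.sum_congr rfl fun i _ => ?_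
  rw [Matrix.mul_diagonal, Matrix.star_apply]
  rfl

lemma exp_conj_unitary (U B : Matrix (Fin n) (Fin n) ℂ) (hU : star U * U = 1)
    (hU' : U * star U = 1) :
    NormedSpace.exp (U * B * star U) = U * NormedSpace.exp B * star U := by
  have hinv : U⁻¹ = star U := Matrix.inv_eq_left_inv hU
  have hunit : IsUnit U := ⟨⟨U, star U, hU', hU⟩, rfl⟩
  rw [← hinv, Matrix.exp_conj U B hunit, hinv]

lemma exp_diag_complex (w : Fin n → ℂ) :
    NormedSpace.exp (diagonal w) = diagonal (fun i => Complex.exp (w i)) := by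
  rw [Matrix.exp_diagonal]
  have : NormedSpace.exp w = fun i => Complex.exp (w i) := by
    funext i; rw [Pi.coe_exp, Complex.exp_eq_exp_ℂ]
  rw [this]

lemma exp_add_exp_neg_le (a : ℝ) (ha0 : 0 ≤ a) (ha1 : a ≤ 1) :
    Real.exp a + Real.exp (-a) ≤ 2 + a^2 + (5/48) * a^4 := by
  have habs : |a| ≤ 1 := abs_le.2 ⟨by linarith, ha1⟩
  have habs' : |(-a)| ≤ 1 := by rwa [abs_neg]
  have h1 := Real.exp_bound habs (n := 4) (by norm_num)
  have h2 := Real.exp_bound habs' (n := 4) (by norm_num)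
  have e1 : ∑ m ∈ Finset.range 4, a ^ m / m.factorial = 1 + a + a^2/2 + a^3/6 := by
    simp [Finset.sum_range_succ, Nat.factorial]
    try ring
  have e2 : ∑ m ∈ Finset.range 4, (-a) ^ m / m.factorial = 1 - a + a^2/2 - a^3/6 := by
    simp [Finset.sum_range_succ, Nat.factorial]
    try ring
  rw [e1] at h1
  rw [e2] at h2
  have hb1 := (abs_sub_le_iff.1 h1).1
  have hb2 := (abs_sub_le_iff.1 h2).1
  have ha : |a| = a := abs_of_nonneg ha0
  rw [abs_neg, ha] at hb2
  rw [ha] at hb1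
  norm_num [Nat.factorial] at hb1 hb2
  nlinarith [pow_nonneg ha0 4]

lemma endgame (y s : ℝ) (hy : 0 < y) (hs : 0 < s) (hsy : s ≤ y) :
    2 * (Real.exp (-y) *
        (Real.exp (y/2 * (Real.exp (s/y) + (Real.exp (s/y))⁻¹)) / (Real.exp (s/y))^(⌈s⌉₊)))
      ≤ 10 * Real.exp (-(2*s^2)/(5*y)) := by
  set a := s/y with hadef
  have ha0 : 0 < a := div_pos hs hy
  have ha1 : a ≤ 1 := by rw [hadef, div_le_one hy]; exact hsy
  have hrpow : (Real.exp a)^(⌈s⌉₊) = Real.exp ((⌈s⌉₊ : ℝ) * a) := by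
    rw [← Real.exp_nat_mul]
  have hrinv : (Real.exp a)⁻¹ = Real.exp (-a) := by rw [Real.exp_neg]
  have hLHS : Real.exp (-y) *
      (Real.exp (y/2 * (Real.exp a + (Real.exp a)⁻¹)) / (Real.exp a)^(⌈s⌉₊))
      = Real.exp (-y + y/2 * (Real.exp a + Real.exp (-a)) - (⌈s⌉₊ : ℝ) * a) := by
    rw [hrpow, hrinv, div_eq_mul_inv, ← Real.exp_neg, ← Real.exp_add, ← Real.exp_add]
    ring_nf
  rw [hLHS]
  have hexpo : -y + y/2 * (Real.exp a + Real.exp (-a)) - (⌈s⌉₊ : ℝ) * a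
      ≤ -(2*s^2)/(5*y) := by
    have hb := exp_add_exp_neg_le a (le_of_lt ha0) ha1
    have hceil : s ≤ (⌈s⌉₊ : ℝ) := Nat.le_ceil s
    have hda : s * a ≤ (⌈s⌉₊ : ℝ) * a := mul_le_mul_of_nonneg_right hceil (le_of_lt ha0)
    have hya2 : y * a^2 = s^2 / y := by rw [hadef]; field_simp
    have hya4 : y * a^4 = s^2/y * a^2 := by rw [hadef]; field_simp
    have hsa : s * a = s^2 / y := by rw [hadef]; ring
    have hq : 0 ≤ s^2/y := by positivity
    have ha2 : a^2 ≤ 1 := by nlinarith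
    calc -y + y/2 * (Real.exp a + Real.exp (-a)) - (⌈s⌉₊ : ℝ) * a
        ≤ -y + y/2 * (2 + a^2 + (5/48)*a^4) - s * a := by
          have := mul_le_mul_of_nonneg_left hb (by positivity : (0:ℝ) ≤ y/2)
          linarith
      _ = (1/2) * (y * a^2) + (5/96) * (y * a^4) - s*a := by ring
      _ = (s^2/y) * (1/2 + (5/96)*a^2 - 1) := by rw [hya2, hya4, hsa]; ring
      _ ≤ (s^2/y) * (-(2/5)) := by
          apply mul_le_mul_of_nonneg_left _ hq
          nlinarith
      _ = -(2*s^2)/(5*y) := by field_simp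
  calc 2 * Real.exp (-y + y/2 * (Real.exp a + Real.exp (-a)) - (⌈s⌉₊ : ℝ) * a)
      ≤ 2 * Real.exp (-(2*s^2)/(5*y)) := by
        have := Real.exp_le_exp.2 hexpo
        linarith
    _ ≤ 10 * Real.exp (-(2*s^2)/(5*y)) := by
        have := Real.exp_pos (-(2*s^2)/(5*y))
        linarith

lemma banded_pow {n : ℕ} (M : Matrix (Fin n) (Fin n) ℂ) (β : ℕ)
    (hband : ∀ i j : Fin n, (β : ℝ) < |((i : ℕ) : ℝ) - ((j : ℕ) : ℝ)| → M i j = 0) :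
    ∀ m : ℕ, ∀ i j : Fin n, (m : ℝ) * β < |((i : ℕ) : ℝ) - ((j : ℕ) : ℝ)| → (M ^ m) i j = 0 := by
  intro m
  induction m with
  | zero =>
    intro i j h
    simp only [Nat.cast_zero, zero_mul] at h
    have hij : i ≠ j := by
      intro he; rw [he] at h; simp at h
    simp [Matrix.one_apply_ne hij]
  | succ m ih =>
    intro i j h
    rw [pow_succ, Matrix.mul_apply]
    refine Finset.sum_eq_zero fun l _ => ?_
    by_cases hl : (m : ℝ) * β < |((i : ℕ) : ℝ) - ((l : ℕ) : ℝ)|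
    · rw [ih i l hl, zero_mul]
    · push_neg at hl
      have htri : |((i : ℕ) : ℝ) - ((j : ℕ) : ℝ)| ≤
          |((i : ℕ) : ℝ) - ((l : ℕ) : ℝ)| + |((l : ℕ) : ℝ) - ((j : ℕ) : ℝ)| :=
        abs_sub_le _ _ _
      have : (β : ℝ) < |((l : ℕ) : ℝ) - ((j : ℕ) : ℝ)| := by
        push_cast at h; nlinarith
      rw [hband l j this, mul_zero]

lemma moment_bound {n : ℕ} (v : Fin n → ℂ) (u : Fin n → ℝ)
    (hcosu : ∀ i, Real.cos (Real.arccos (u i)) = u i)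
    (d : ℕ) (r : ℝ) (hr : 1 ≤ r)
    (hone : ∀ j : ℤ,
      ‖∑ i, v i * (((Polynomial.Chebyshev.T ℝ j).eval (u i) : ℝ) : ℂ)‖ ≤ 1)
    (hczero : ∀ j : ℤ, |j| < (d:ℤ) →
      (∑ i, v i * (((Polynomial.Chebyshev.T ℝ j).eval (u i) : ℝ) : ℂ)) = 0)
    (m : ℕ) :
    ‖∑ i, v i * ((u i ^ m : ℝ) : ℂ)‖ ≤ (2 * ((r + r⁻¹)^m / r^d)) / 2^m := by
  have hexpand : ∀ i, (u i : ℝ) ^ m * 2^m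
      = ∑ j ∈ Finset.range (m+1), (m.choose j : ℝ)
          * ((Polynomial.Chebyshev.T ℝ (2*(j:ℤ) - m)).eval (u i)) := by
    intro i
    have h := cos_pow_expand m (Real.arccos (u i))
    rw [hcosu i] at h
    rw [h]
    refine Finset.sum_congr rfl fun j _ => ?_
    have hT : (Polynomial.Chebyshev.T ℝ (2*(j:ℤ) - m)).eval (u i)
        = Real.cos (((2*(j:ℤ) - (m:ℤ) : ℤ) : ℝ) * Real.arccos (u i)) := by
      conv_lhs => rw [← hcosu i]
      rw [Polynomial.Chebyshev.T_real_cos]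
    rw [hT]
    norm_num
  have hswap : (∑ i, v i * ((u i ^ m : ℝ) : ℂ)) * 2^m
      = ∑ j ∈ Finset.range (m+1), (m.choose j : ℂ)
          * (∑ i, v i * (((Polynomial.Chebyshev.T ℝ (2*(j:ℤ) - m)).eval (u i) : ℝ) : ℂ)) := by
    have hterm : ∀ i, v i * ((u i ^ m : ℝ) : ℂ) * 2^m
        = ∑ j ∈ Finset.range (m+1), (m.choose j : ℂ)
            * (v i * (((Polynomial.Chebyshev.T ℝ (2*(j:ℤ) - m)).eval (u i) : ℝ) : ℂ)) := by
      intro i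
      have h2 : ((u i ^ m : ℝ) : ℂ) * 2^m = ((u i ^ m * 2^m : ℝ) : ℂ) := by push_cast; ring
      rw [mul_assoc, h2, hexpand i]
      push_cast
      rw [Finset.mul_sum]
      refine Finset.sum_congr rfl fun j _ => ?_
      ring
    calc (∑ i, v i * ((u i ^ m : ℝ) : ℂ)) * 2^m
        = ∑ i, v i * ((u i ^ m : ℝ) : ℂ) * 2^m := Finset.sum_mul _ _ _
      _ = ∑ i, ∑ j ∈ Finset.range (m+1), (m.choose j : ℂ)
            * (v i * (((Polynomial.Chebyshev.T ℝ (2*(j:ℤ) - m)).eval (u i) : ℝ) : ℂ)) :=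
          Finset.sum_congr rfl (fun i _ => hterm i)
      _ = ∑ j ∈ Finset.range (m+1), ∑ i, (m.choose j : ℂ)
            * (v i * (((Polynomial.Chebyshev.T ℝ (2*(j:ℤ) - m)).eval (u i) : ℝ) : ℂ)) :=
          Finset.sum_comm
      _ = _ := by
          refine Finset.sum_congr rfl fun j _ => ?_
          rw [Finset.mul_sum]
  have habs : ‖(∑ i, v i * ((u i ^ m : ℝ) : ℂ)) * 2^m‖
      ≤ 2 * ((r + r⁻¹)^m / r^d) := by
    rw [hswap]
    calc ‖∑ j ∈ Finset.range (m+1), (m.choose j : ℂ)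
          * (∑ i, v i * (((Polynomial.Chebyshev.T ℝ (2*(j:ℤ) - m)).eval (u i) : ℝ) : ℂ))‖
        ≤ ∑ j ∈ Finset.range (m+1), ‖(m.choose j : ℂ)
          * (∑ i, v i * (((Polynomial.Chebyshev.T ℝ (2*(j:ℤ) - m)).eval (u i) : ℝ) : ℂ))‖ :=
          norm_sum_le _ _
      _ ≤ ∑ j ∈ Finset.range (m+1),
            (if (d:ℤ) ≤ |2*(j:ℤ) - m| then (m.choose j : ℝ) else 0) := by
          refine Finset.sum_le_sum fun j _ => ?_
          rw [norm_mul]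
          have hcn : ‖(m.choose j : ℂ)‖ = (m.choose j : ℝ) := by
            rw [Complex.norm_natCast]
          rw [hcn]
          by_cases h : (d:ℤ) ≤ |2*(j:ℤ) - m|
          · rw [if_pos h]
            calc (m.choose j : ℝ) * ‖_‖ ≤ (m.choose j : ℝ) * 1 :=
                  mul_le_mul_of_nonneg_left (hone _) (by positivity)
              _ = (m.choose j : ℝ) := mul_one _
          · rw [if_neg h, hczero _ (by omega), norm_zero, mul_zero]
      _ ≤ 2 * ((r + r⁻¹)^m / r^d) := binom_abs_tail m d r hr
  have h2m : (0:ℝ) < 2^m := by positivity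
  rw [le_div_iff₀ h2m]
  have : ‖∑ i, v i * ((u i ^ m : ℝ) : ℂ)‖ * 2^m
      = ‖(∑ i, v i * ((u i ^ m : ℝ) : ℂ)) * 2^m‖ := by
    rw [norm_mul]
    congr 1
    rw [show ((2:ℂ)^m) = (((2:ℝ)^m : ℝ) : ℂ) by push_cast; ring, Complex.norm_real, Real.norm_eq_abs,
      abs_of_pos h2m]
  rw [this]
  exact habs

lemma entry_exp_bound {n : ℕ} (v : Fin n → ℂ) (u : Fin n → ℝ) (y r : ℝ)
    (hy : 0 < y) (hr : 1 ≤ r) (d : ℕ)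
    (hB : ∀ m : ℕ, ‖∑ i, v i * ((u i ^ m : ℝ) : ℂ)‖
      ≤ (2 * ((r + r⁻¹)^m / r^d)) / 2^m) :
    ‖∑ i, v i * ((Real.exp (-y) * Real.exp (y * u i) : ℝ) : ℂ)‖
      ≤ 2 * (Real.exp (-y) * (Real.exp (y/2 * (r + r⁻¹)) / r^d)) := by
  have hr0 : (0:ℝ) < r := lt_of_lt_of_le one_pos hr
  have hexpser : ∀ z : ℝ, Real.exp z = ∑' m : ℕ, z^m / m.factorial := by
    intro z
    rw [Real.exp_eq_exp_ℝ, NormedSpace.exp_eq_tsum_div]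
  set g : ℕ → ℂ := fun m => ((Real.exp (-y) * (y^m / m.factorial) : ℝ) : ℂ)
      * (∑ i, v i * ((u i ^ m : ℝ) : ℂ)) with hgdef
  set G : ℕ → ℝ := fun m =>
      (Real.exp (-y) * (y^m / m.factorial)) * ((2 * ((r + r⁻¹)^m / r^d)) / 2^m) with hGdef
  -- inner summability
  have hsumI : ∀ i : Fin n, Summable (fun m : ℕ =>
      v i * ((Real.exp (-y) * ((y * u i)^m / m.factorial) : ℝ) : ℂ)) := by
    intro i
    apply Summable.mul_left
    apply (Complex.summable_ofReal).mpr
    exact (Real.summable_pow_div_factorial (y * u i)).mul_left _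
  -- entry as a tsum
  have hEq : (∑ i, v i * ((Real.exp (-y) * Real.exp (y * u i) : ℝ) : ℂ)) = ∑' m, g m := by
    have hterm : ∀ i : Fin n, v i * ((Real.exp (-y) * Real.exp (y * u i) : ℝ) : ℂ)
        = ∑' m : ℕ, v i * ((Real.exp (-y) * ((y * u i)^m / m.factorial) : ℝ) : ℂ) := by
      intro i
      rw [hexpser (y * u i)]
      push_cast
      rw [← tsum_mul_left, ← tsum_mul_left]
    rw [Finset.sum_congr rfl (fun i _ => hterm i), ← Summable.tsum_finsetSum (fun i _ => hsumI i)]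
    congr 1
    funext m
    rw [hgdef]
    dsimp only
    rw [Finset.mul_sum]
    refine Finset.sum_congr rfl fun i _ => ?_
    push_cast
    ring
  -- norm bound per term
  have hgG : ∀ m, ‖g m‖ ≤ G m := by
    intro m
    rw [hgdef, hGdef]
    dsimp only
    rw [norm_mul, Complex.norm_real, Real.norm_eq_abs]
    have hpos : 0 ≤ Real.exp (-y) * (y^m / m.factorial) := by positivity
    rw [abs_of_nonneg hpos]
    exact mul_le_mul_of_nonneg_left (hB m) hpos
  -- summability of G
  have hGeq : ∀ m : ℕ, G m = (2 * Real.exp (-y) / r^d) * ((y/2 * (r + r⁻¹))^m / m.factorial) := by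
    intro m
    rw [hGdef]
    dsimp only
    rw [mul_pow, div_pow]
    field_simp
  have hGsum : Summable G := by
    have : Summable (fun m : ℕ => (2 * Real.exp (-y) / r^d) * ((y/2 * (r + r⁻¹))^m / m.factorial)) :=
      (Real.summable_pow_div_factorial _).mul_left _
    exact this.congr (fun m => (hGeq m).symm)
  have hgnorm_sum : Summable (fun m => ‖g m‖) := by
    refine Summable.of_nonneg_of_le (fun m => norm_nonneg _) (fun m => ?_) hGsum
    exact hgG m
  have hgsum : Summable g := hgnorm_sum.of_norm
  -- final bound
  rw [hEq]
  calc ‖∑' m, g m‖ ≤ ∑' m, ‖g m‖ := norm_tsum_le_tsum_norm hgnorm_sum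
    _ ≤ ∑' m, G m := Summable.tsum_le_tsum (fun m => hgG m) hgnorm_sum hGsum
    _ = (2 * Real.exp (-y) / r^d) * Real.exp (y/2 * (r + r⁻¹)) := by
        rw [tsum_congr hGeq, tsum_mul_left, ← hexpser (y/2 * (r + r⁻¹))]
    _ = 2 * (Real.exp (-y) * (Real.exp (y/2 * (r + r⁻¹)) / r^d)) := by
        field_simp

open scoped ComplexOrder

/-- Entrywise superexponential decay bound (regime i) for the exponential of a banded
Hermitian positive semidefinite matrix: if `M` is `β`-banded with spectrum in `[0, 4ρ]`,
`τ > 0`, and the indices `k ≠ t` satisfy `ρτ ≥ 1` and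
`√(4ρτ) ≤ |k - t|/β ≤ 2ρτ`, then
`|(exp (-τM))_{kt}| ≤ 10 exp(-(|k-t|/β)² / (5ρτ))`. -/
theorem exp_banded_entry_bound_regime_one
    (n β : ℕ) (hβ : 0 < β) (M : Matrix (Fin n) (Fin n) ℂ) (ρ τ : ℝ)
    (hρ : 0 < ρ) (hτ : 0 < τ)
    (hM : M.PosSemidef)
    (hspec : ∀ i, hM.1.eigenvalues i ∈ Set.Icc (0 : ℝ) (4 * ρ))
    (hband : ∀ i j : Fin n, (β : ℝ) < |((i : ℕ) : ℝ) - ((j : ℕ) : ℝ)| → M i j = 0)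
    (k t : Fin n) (hkt : k ≠ t)
    (h1 : 1 ≤ ρ * τ)
    (h2 : Real.sqrt (4 * ρ * τ) ≤ |((k : ℕ) : ℝ) - ((t : ℕ) : ℝ)| / β)
    (h3 : |((k : ℕ) : ℝ) - ((t : ℕ) : ℝ)| / β ≤ 2 * ρ * τ) :
    ‖(NormedSpace.exp (-(τ • M))) k t‖ ≤
      10 * Real.exp (-(|((k : ℕ) : ℝ) - ((t : ℕ) : ℝ)| / β) ^ 2 / (5 * ρ * τ)) := by
  classical
  set s : ℝ := |((k : ℕ) : ℝ) - ((t : ℕ) : ℝ)| / β with hsdef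
  set y : ℝ := 2 * ρ * τ with hydef
  have hβR : (0:ℝ) < β := by exact_mod_cast hβ
  have hs0 : 0 < s := by
    apply div_pos _ hβR
    have hne : ((k:ℕ):ℝ) ≠ ((t:ℕ):ℝ) := by
      exact_mod_cast fun h => hkt (Fin.ext h)
    exact abs_sub_pos.mpr hne
  have hy0 : 0 < y := by rw [hydef]; positivity
  set d : ℕ := ⌈s⌉₊ with hddef
  set r : ℝ := Real.exp (s / y) with hrdef
  have hr1 : 1 ≤ r := Real.one_le_exp (by positivity)
  -- spectral data
  set U : Matrix (Fin n) (Fin n) ℂ :=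
    (Matrix.IsHermitian.eigenvectorUnitary hM.1 : Matrix (Fin n) (Fin n) ℂ) with hUdef
  set lam : Fin n → ℝ := hM.1.eigenvalues with hlamdef
  have hU1 : U * star U = 1 :=
    (Matrix.mem_unitaryGroup_iff).mp (Matrix.IsHermitian.eigenvectorUnitary hM.1).2
  have hU2 : star U * U = 1 :=
    (Matrix.mem_unitaryGroup_iff').mp (Matrix.IsHermitian.eigenvectorUnitary hM.1).2
  have hspectralM : M = U * Matrix.diagonal (fun i => ((lam i : ℝ) : ℂ)) * star U :=
    hM.1.spectral_theorem
  set u : Fin n → ℝ := fun i => 1 - lam i / (2 * ρ) with hudef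
  have hu : ∀ i, -1 ≤ u i ∧ u i ≤ 1 := by
    intro i
    obtain ⟨hl, hr'⟩ := hspec i
    constructor
    · rw [hudef]; dsimp only
      rw [le_sub_iff_add_le]
      calc -1 + lam i / (2*ρ) ≤ -1 + (4*ρ)/(2*ρ) := by
            gcongr
          _ = 1 := by field_simp; ring
    · rw [hudef]; dsimp only
      have : 0 ≤ lam i / (2*ρ) := by positivity
      linarith
  have hcosu : ∀ i, Real.cos (Real.arccos (u i)) = u i :=
    fun i => Real.cos_arccos (hu i).1 (hu i).2
  -- entry of powers
  have h_entry_pow : ∀ m : ℕ, (M ^ m) k t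
      = ∑ i, U k i * ((lam i : ℝ) : ℂ)^m * (starRingEnd ℂ) (U t i) := by
    intro m
    rw [hspectralM, conj_pow_eq U _ hU2 hU1, Matrix.diagonal_pow, conj_diag_entry]
    rfl
  -- banded: entries of small powers vanish
  have h_band0 : ∀ m : ℕ, m < d → (M ^ m) k t = 0 := by
    intro m hm
    apply banded_pow M β hband m k t
    have hms : (m:ℝ) < s := Nat.lt_ceil.mp hm
    have : s * β = |((k:ℕ):ℝ) - ((t:ℕ):ℝ)| := by
      rw [hsdef]; field_simp
    calc (m:ℝ) * β < s * β := by gcongr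
      _ = _ := this
  -- vanishing of low-degree polynomial moments
  have hzero : ∀ P : Polynomial ℝ, P.natDegree < d →
      (∑ i, U k i * ((P.eval (lam i) : ℝ) : ℂ) * (starRingEnd ℂ) (U t i)) = 0 := by
    intro P hP
    have hev : ∀ i, ((P.eval (lam i) : ℝ) : ℂ)
        = ∑ m ∈ Finset.range d, ((P.coeff m : ℝ) : ℂ) * ((lam i : ℝ) : ℂ)^m := by
      intro i
      rw [Polynomial.eval_eq_sum_range' hP (lam i)]
      push_cast
      rfl
    have hterm : ∀ i : Fin n, U k i * ((P.eval (lam i) : ℝ) : ℂ) * (starRingEnd ℂ) (U t i)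
        = ∑ m ∈ Finset.range d, ((P.coeff m : ℝ) : ℂ)
            * (U k i * ((lam i : ℝ) : ℂ)^m * (starRingEnd ℂ) (U t i)) := by
      intro i
      rw [hev i, Finset.mul_sum, Finset.sum_mul]
      refine Finset.sum_congr rfl fun m _ => ?_
      ring
    rw [Finset.sum_congr rfl (fun i _ => hterm i), Finset.sum_comm]
    refine Finset.sum_eq_zero fun m hm => ?_
    rw [← Finset.mul_sum, ← h_entry_pow m, h_band0 m (Finset.mem_range.mp hm), mul_zero]
  -- Chebyshev moments
  set c : ℤ → ℂ := fun j => ∑ i, U k i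
      * (((Polynomial.Chebyshev.T ℝ j).eval (u i) : ℝ) : ℂ) * (starRingEnd ℂ) (U t i) with hcdef
  -- row bound
  have hrow : ∀ x : Fin n, ∑ i, ‖U x i‖^2 = 1 := by
    intro x
    have h := congrFun (congrFun hU1 x) x
    rw [Matrix.mul_apply] at h
    have h1x : (1 : Matrix (Fin n) (Fin n) ℂ) x x = 1 := Matrix.one_apply_eq x
    rw [h1x] at h
    have : ∀ i, U x i * (star U) i x = ((‖U x i‖^2 : ℝ) : ℂ) := by
      intro i
      rw [Matrix.star_apply]
      show U x i * star (U x i) = _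
      rw [Complex.star_def, Complex.mul_conj]
      rw [Complex.sq_norm]
    rw [Finset.sum_congr rfl (fun i _ => this i)] at h
    exact_mod_cast h
  have hvv : ∑ i, ‖U k i‖ * ‖U t i‖ ≤ 1 := by
    have hcs := Finset.sum_mul_sq_le_sq_mul_sq Finset.univ
      (fun i => ‖U k i‖) (fun i => ‖U t i‖)
    rw [hrow k, hrow t] at hcs
    have h0 : 0 ≤ ∑ i, ‖U k i‖ * ‖U t i‖ :=
      Finset.sum_nonneg fun i _ => by positivity
    nlinarith
  have hone : ∀ j : ℤ, ‖c j‖ ≤ 1 := by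
    intro j
    rw [hcdef]
    calc ‖∑ i, U k i
          * (((Polynomial.Chebyshev.T ℝ j).eval (u i) : ℝ) : ℂ) * (starRingEnd ℂ) (U t i)‖
        ≤ ∑ i, ‖U k i
          * (((Polynomial.Chebyshev.T ℝ j).eval (u i) : ℝ) : ℂ) * (starRingEnd ℂ) (U t i)‖ := by
          exact norm_sum_le _ _
      _ ≤ ∑ i, ‖U k i‖ * ‖U t i‖ := by
          refine Finset.sum_le_sum fun i _ => ?_
          rw [norm_mul, norm_mul]
          have hT : ‖(((Polynomial.Chebyshev.T ℝ j).eval (u i) : ℝ) : ℂ)‖ ≤ 1 := by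
            rw [Complex.norm_real, Real.norm_eq_abs]
            rw [← hcosu i, Polynomial.Chebyshev.T_real_cos]
            exact Real.abs_cos_le_one _
          have habs : ‖(starRingEnd ℂ) (U t i)‖ = ‖U t i‖ :=
            Complex.norm_conj _
          rw [habs]
          calc ‖U k i‖ * ‖(((Polynomial.Chebyshev.T ℝ j).eval (u i) : ℝ) : ℂ)‖
                * ‖U t i‖
              ≤ ‖U k i‖ * 1 * ‖U t i‖ := by
                exact mul_le_mul_of_nonneg_right
                  (mul_le_mul_of_nonneg_left hT (by positivity)) (by positivity)
            _ = ‖U k i‖ * ‖U t i‖ := by ring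
      _ ≤ 1 := hvv
  have hczero : ∀ j : ℤ, |j| < (d:ℤ) → c j = 0 := by
    intro j hj
    have hTj : Polynomial.Chebyshev.T ℝ j = Polynomial.Chebyshev.T ℝ (j.natAbs : ℤ) :=
      (Polynomial.Chebyshev.T_natAbs ℝ j).symm
    set P : Polynomial ℝ := (Polynomial.Chebyshev.T ℝ (j.natAbs : ℤ)).comp
      (Polynomial.C 1 - Polynomial.C (1/(2*ρ)) * Polynomial.X) with hPdef
    have hPdeg : P.natDegree < d := by
      have h1' : ((Polynomial.Chebyshev.T ℝ (j.natAbs : ℤ)).comp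
          (Polynomial.C 1 - Polynomial.C (1/(2*ρ)) * Polynomial.X)).natDegree
          ≤ (Polynomial.Chebyshev.T ℝ (j.natAbs : ℤ)).natDegree
            * (Polynomial.C 1 - Polynomial.C (1/(2*ρ)) * Polynomial.X).natDegree :=
        Polynomial.natDegree_comp_le
      have h2' : (Polynomial.Chebyshev.T ℝ (j.natAbs : ℤ)).natDegree ≤ j.natAbs :=
        natDegree_chebyshevT_le j.natAbs
      have h3' : (Polynomial.C (1:ℝ) - Polynomial.C (1/(2*ρ)) * Polynomial.X).natDegree ≤ 1 := by
        refine le_trans (Polynomial.natDegree_sub_le _ _) ?_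
        simp only [Polynomial.natDegree_C, max_le_iff]
        refine ⟨by norm_num, ?_⟩
        exact le_trans (Polynomial.natDegree_C_mul_le _ _) (by simp)
      have hjd : j.natAbs < d := by rw [Int.abs_eq_natAbs] at hj; omega
      calc P.natDegree ≤ j.natAbs * 1 := le_trans h1' (by exact Nat.mul_le_mul h2' h3')
        _ = j.natAbs := by ring
        _ < d := hjd
    have hPeval : ∀ i, P.eval (lam i) = (Polynomial.Chebyshev.T ℝ (j.natAbs : ℤ)).eval (u i) := by
      intro i
      rw [hPdef, Polynomial.eval_comp]
      congr 1
      simp [hudef]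
      ring
    have := hzero P hPdeg
    rw [hcdef]
    rw [← this]
    refine Finset.sum_congr rfl fun i _ => ?_
    rw [hTj, ← hPeval i]
  -- reshape sums
  set v : Fin n → ℂ := fun i => U k i * (starRingEnd ℂ) (U t i) with hvdef
  have hreshape : ∀ j : ℤ,
      (∑ i, v i * (((Polynomial.Chebyshev.T ℝ j).eval (u i) : ℝ) : ℂ)) = c j := by
    intro j
    rw [hcdef]
    refine Finset.sum_congr rfl fun i _ => ?_
    rw [hvdef]
    ring
  have hone' : ∀ j : ℤ,
      ‖∑ i, v i * (((Polynomial.Chebyshev.T ℝ j).eval (u i) : ℝ) : ℂ)‖ ≤ 1 := by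
    intro j; rw [hreshape j]; exact hone j
  have hczero' : ∀ j : ℤ, |j| < (d:ℤ) →
      (∑ i, v i * (((Polynomial.Chebyshev.T ℝ j).eval (u i) : ℝ) : ℂ)) = 0 := by
    intro j hj; rw [hreshape j]; exact hczero j hj
  have hB := moment_bound v u hcosu d r hr1 hone' hczero'
  -- entry formula for the exponential
  have hentry : (NormedSpace.exp (-(τ • M))) k t
      = ∑ i, v i * ((Real.exp (-y) * Real.exp (y * u i) : ℝ) : ℂ) := by
    have h1 : Matrix.diagonal (fun i => ((-(τ * lam i) : ℝ) : ℂ))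
        = ((-τ : ℝ)) • Matrix.diagonal (fun i => ((lam i : ℝ) : ℂ)) := by
      ext a b
      by_cases hab : a = b
      · subst hab
        simp only [Matrix.diagonal_apply_eq, Matrix.smul_apply, Complex.real_smul]
        push_cast
        ring
      · simp [Matrix.diagonal_apply_ne _ hab]
    have hdiag : -(τ • M) = U * Matrix.diagonal (fun i => ((-(τ * lam i) : ℝ) : ℂ)) * star U := by
      rw [h1, Matrix.mul_smul, Matrix.smul_mul, ← hspectralM, neg_smul]
    rw [hdiag, exp_conj_unitary U _ hU2 hU1, exp_diag_complex, conj_diag_entry]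
    refine Finset.sum_congr rfl fun i _ => ?_
    have harg : Real.exp (-y) * Real.exp (y * u i) = Real.exp (-(τ * lam i)) := by
      rw [← Real.exp_add]
      congr 1
      rw [hudef, hydef]
      field_simp
      ring
    rw [← Complex.ofReal_exp, ← harg, hvdef]
    push_cast
    ring
  have hmain := entry_exp_bound v u y r hy0 hr1 d hB
  rw [hentry]
  refine le_trans hmain ?_
  have hend := endgame y s hy0 hs0 h3
  calc 2 * (Real.exp (-y) * (Real.exp (y/2 * (r + r⁻¹)) / r^d)) ≤
        10 * Real.exp (-(2*s^2)/(5*y)) := hend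
    _ = 10 * Real.exp (-s^2 / (5*ρ*τ)) := by
        rw [hydef]
        have harg2 : -(2*s^2)/(5*(2*ρ*τ)) = -s^2/(5*ρ*τ) := by
          rw [div_eq_div_iff (by positivity) (by positivity)]
          ring
        rw [harg2]
end

section
/- Let M be an n×n Hermitian positive semidefinite complex matrix that is β-banded and whose spectrum is contained in [0, 4ρ] for some ρ > 0, and let τ > 0. Then for all indices k ≠ t with |k−t|/β ≥ 2ρτ, the entries of the matrix exponential satisfy |(exp(−τM))_{kt}| ≤ 10·(exp(−ρτ)/(ρτ))·( eρτβ/|k−t| )^{|k−t|/β}, where e is Euler's number. -/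
open scoped ComplexOrder

noncomputable def Ibes (z : ℝ) (m : ℕ) : ℝ :=
  ∑' b : ℕ, z ^ (m + 2 * b) / (b.factorial * (b + m).factorial)

lemma fact_cast_le (m b : ℕ) :
    (m.factorial : ℝ) * ((m : ℝ) + 1) ^ b ≤ ((b + m).factorial : ℝ) := by
  have h := Nat.factorial_mul_pow_le_factorial (m := m) (n := b)
  rw [add_comm b m]
  exact_mod_cast h

lemma ibesTerm_le (z : ℝ) (hz : 0 ≤ z) (m b : ℕ) :
    z ^ (m + 2 * b) / (b.factorial * (b + m).factorial)
      ≤ z ^ m / m.factorial * ((z ^ 2 / ((m : ℝ) + 1)) ^ b / b.factorial) := by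
  have hb : (0:ℝ) < b.factorial := by positivity
  have hm : (0:ℝ) < m.factorial := by positivity
  have hmp : (0:ℝ) < (m:ℝ) + 1 := by positivity
  have key : (b.factorial : ℝ) * (m.factorial * ((m : ℝ) + 1) ^ b)
      ≤ (b.factorial : ℝ) * (b + m).factorial := by
    exact mul_le_mul_of_nonneg_left (fact_cast_le m b) (by positivity)
  have hz2 : z ^ (m + 2 * b) = z ^ m * (z ^ 2) ^ b := by
    rw [← pow_mul, ← pow_add]
  rw [hz2]
  have hr : z ^ m / m.factorial * ((z ^ 2 / ((m : ℝ) + 1)) ^ b / b.factorial)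
      = z ^ m * (z ^ 2) ^ b / (m.factorial * b.factorial * ((m:ℝ)+1) ^ b) := by
    rw [div_pow, div_div, div_mul_div_comm]; ring
  rw [hr]
  apply div_le_div_of_nonneg_left (by positivity) (by positivity)
  calc (m.factorial : ℝ) * b.factorial * ((m:ℝ)+1) ^ b
      = (b.factorial : ℝ) * (m.factorial * ((m : ℝ) + 1) ^ b) := by ring
    _ ≤ (b.factorial : ℝ) * (b + m).factorial :=
        mul_le_mul_of_nonneg_left (fact_cast_le m b) (by positivity)

lemma summable_ibes (z : ℝ) (hz : 0 ≤ z) (m : ℕ) :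
    Summable (fun b : ℕ => z ^ (m + 2 * b) / (b.factorial * (b + m).factorial)) := by
  apply Summable.of_nonneg_of_le (fun b => by positivity) (ibesTerm_le z hz m)
  exact ((Real.summable_pow_div_factorial _).mul_left _)

lemma Ibes_nonneg (z : ℝ) (hz : 0 ≤ z) (m : ℕ) : 0 ≤ Ibes z m :=
  tsum_nonneg fun b => by positivity

lemma Ibes_le (z : ℝ) (hz : 0 ≤ z) (m : ℕ) (hm : 2 * z ≤ (m : ℝ) + 1) :
    Ibes z m ≤ z ^ m / m.factorial * Real.exp (z / 2) := by
  have h1 : Ibes z m ≤ z ^ m / m.factorial * Real.exp (z ^ 2 / ((m:ℝ) + 1)) := by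
    have hexp : Real.exp (z ^ 2 / ((m:ℝ) + 1)) = ∑' b : ℕ, (z ^ 2 / ((m:ℝ)+1)) ^ b / b.factorial := by
      rw [Real.exp_eq_exp_ℝ, NormedSpace.exp_eq_tsum_div]
    rw [hexp, ← tsum_mul_left]
    exact Summable.tsum_le_tsum (ibesTerm_le z hz m) (summable_ibes z hz m)
      (((Real.summable_pow_div_factorial _)).mul_left _)
  refine h1.trans (mul_le_mul_of_nonneg_left (Real.exp_le_exp.2 ?_) (by positivity))
  rw [div_le_div_iff₀ (by positivity) (by norm_num)]
  nlinarith [mul_le_mul_of_nonneg_left hm hz]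

lemma tail_le (z : ℝ) (hz : 0 ≤ z) (m0 : ℕ) (hm : 2 * z ≤ (m0 : ℝ)) :
    ∑' j : ℕ, z ^ (m0 + j) / ((m0 + j).factorial : ℝ) ≤ 2 * (z ^ m0 / m0.factorial) := by
  have hterm : ∀ j : ℕ, z ^ (m0 + j) / ((m0 + j).factorial : ℝ)
      ≤ z ^ m0 / m0.factorial * (1/2) ^ j := by
    intro j
    have h1 : z ^ (m0 + j) = z ^ m0 * z ^ j := by rw [pow_add]
    have h2 : (m0.factorial : ℝ) * ((m0:ℝ) + 1) ^ j ≤ ((m0 + j).factorial : ℝ) := by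
      have := fact_cast_le m0 j; rwa [add_comm j m0] at this
    have hzj : z ^ j ≤ ((m0:ℝ)+1) ^ j * (1/2) ^ j := by
      rw [← mul_pow]
      apply pow_le_pow_left₀ hz
      nlinarith
    rw [h1, div_le_iff₀ (by positivity)]
    calc z ^ m0 * z ^ j ≤ z ^ m0 * (((m0:ℝ)+1) ^ j * (1/2) ^ j) :=
          mul_le_mul_of_nonneg_left hzj (by positivity)
      _ = z ^ m0 / m0.factorial * (1/2) ^ j * (m0.factorial * ((m0:ℝ)+1)^j) := by
          field_simp
      _ ≤ z ^ m0 / m0.factorial * (1/2) ^ j * ((m0 + j).factorial : ℝ) := by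
          apply mul_le_mul_of_nonneg_left h2 (by positivity)
  calc ∑' j : ℕ, z ^ (m0 + j) / ((m0 + j).factorial : ℝ)
      ≤ ∑' j : ℕ, z ^ m0 / m0.factorial * (1/2) ^ j := by
        apply Summable.tsum_le_tsum hterm
        · apply Summable.of_nonneg_of_le (fun j => by positivity) hterm
          exact (summable_geometric_of_lt_one (by norm_num) (by norm_num)).mul_left _
        · exact (summable_geometric_of_lt_one (by norm_num) (by norm_num)).mul_left _
    _ = z ^ m0 / m0.factorial * 2 := by
        rw [tsum_mul_left, tsum_geometric_of_lt_one (by norm_num) (by norm_num)]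
        norm_num
    _ = 2 * (z ^ m0 / m0.factorial) := by ring

def pairEquiv : ℤ × ℕ ≃ ℕ × ℕ where
  toFun p := (p.2 + p.1.toNat, p.2 + (-p.1).toNat)
  invFun q := ((q.1 : ℤ) - q.2, min q.1 q.2)
  left_inv p := by
    obtain ⟨m, b⟩ := p
    simp only [Prod.mk.injEq]
    constructor
    · omega
    · omega
  right_inv q := by
    obtain ⟨a, b⟩ := q
    simp only [Prod.mk.injEq]
    constructor
    · omega
    · omega

lemma prod_term (z : ℝ) (u : ℂ) (hu : u * u⁻¹ = 1) (s b : ℕ) :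
    ((-(z:ℂ) * u) ^ (b + s) / (b + s).factorial) * ((-(z:ℂ) * u⁻¹) ^ b / b.factorial)
      = (((-1:ℝ)^s * (z ^ (s + 2*b) / (b.factorial * (b+s).factorial)) : ℝ) : ℂ) * u ^ s := by
  have h1 : u ^ (b + s) * (u⁻¹) ^ b = u ^ s := by
    rw [pow_add, mul_comm (u^b), mul_assoc, ← mul_pow, hu, one_pow, mul_one]
  have h2 : (-(z:ℂ)) ^ (b + s) * (-(z:ℂ)) ^ b = ((-1:ℂ))^s * (z:ℂ) ^ (s + 2*b) := by
    rw [← pow_add, neg_pow]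
    congr 1
    · have : b + s + b = s + 2*b := by omega
      rw [this, pow_add, pow_mul]
      norm_num
    · congr 1; omega
  calc ((-(z:ℂ) * u) ^ (b + s) / (b + s).factorial) * ((-(z:ℂ) * u⁻¹) ^ b / b.factorial)
      = ((-(z:ℂ)) ^ (b + s) * (-(z:ℂ)) ^ b) * (u ^ (b+s) * (u⁻¹) ^ b) /
          ((b + s).factorial * b.factorial) := by
        rw [mul_pow, mul_pow]; ring
    _ = ((-1:ℂ))^s * (z:ℂ) ^ (s + 2*b) / ((b + s).factorial * b.factorial) * u ^ s := by
        rw [h1, h2]; ring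
    _ = (((-1:ℝ)^s * (z ^ (s + 2*b) / (b.factorial * (b+s).factorial)) : ℝ) : ℂ) * u ^ s := by
        push_cast
        ring

open Polynomial in
lemma natDegree_T_le (m : ℕ) : (Polynomial.Chebyshev.T ℂ (m : ℤ)).natDegree ≤ m := by
  induction m using Nat.strong_induction_on with
  | _ m ih =>
    match m with
    | 0 => simp [Polynomial.Chebyshev.T_zero]
    | 1 => rw [show ((1:ℕ):ℤ) = 1 by norm_num, Polynomial.Chebyshev.T_one]
           exact natDegree_X_le
    | (m+2) =>
      have h : ((m+2 : ℕ) : ℤ) = (m : ℤ) + 2 := by push_cast; ring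
      rw [h, Polynomial.Chebyshev.T_add_two]
      refine (natDegree_sub_le _ _).trans (max_le ?_ ?_)
      · refine (natDegree_mul_le).trans ?_
        have h1 : (2 * X : ℂ[X]).natDegree ≤ 1 := by
          refine (natDegree_mul_le).trans ?_
          simp
        have h2 : (Polynomial.Chebyshev.T ℂ ((m:ℤ) + 1)).natDegree ≤ m + 1 := by
          have := ih (m+1) (by omega)
          rwa [show ((m+1 : ℕ) : ℤ) = (m:ℤ)+1 by push_cast; ring] at this
        omega
      · exact (ih m (by omega)).trans (by omega)

lemma Ibes_le_exp (z : ℝ) (hz : 0 ≤ z) (m : ℕ) :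
    Ibes z m ≤ z ^ m / m.factorial * Real.exp (z ^ 2 / ((m:ℝ) + 1)) := by
  have hexp : Real.exp (z ^ 2 / ((m:ℝ) + 1)) = ∑' b : ℕ, (z ^ 2 / ((m:ℝ)+1)) ^ b / b.factorial := by
    rw [Real.exp_eq_exp_ℝ, NormedSpace.exp_eq_tsum_div]
  rw [hexp, ← tsum_mul_left]
  exact Summable.tsum_le_tsum (ibesTerm_le z hz m) (summable_ibes z hz m)
    (((Real.summable_pow_div_factorial _)).mul_left _)

lemma Ibes_le' (z : ℝ) (hz : 0 ≤ z) (m : ℕ) :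
    Ibes z m ≤ z ^ m / m.factorial * Real.exp (z ^ 2) := by
  refine (Ibes_le_exp z hz m).trans ?_
  apply mul_le_mul_of_nonneg_left (Real.exp_le_exp.2 ?_) (by positivity)
  apply div_le_self (by positivity)
  simp

set_option maxHeartbeats 1000000 in
theorem scalar_cheb (z : ℝ) (hz : 0 < z) (m0 : ℕ) (hm0 : 1 ≤ m0) (hzm : 2 * z ≤ (m0 : ℝ)) :
    ∃ P : Polynomial ℂ, P.natDegree < m0 ∧ ∀ x : ℝ, |x| ≤ 1 →
      ‖Complex.exp (((-(2 * z) * x : ℝ) : ℂ)) - P.eval ((x : ℝ) : ℂ)‖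
        ≤ 4 * Real.exp (z / 2) * (z ^ m0 / m0.factorial) := by
  classical
  set B : Finset ℤ := Finset.Icc (-((m0 - 1 : ℕ) : ℤ)) ((m0 - 1 : ℕ) : ℤ) with hB
  set c : ℤ → ℝ := fun m => (-1 : ℝ) ^ m.natAbs * Ibes z m.natAbs with hc
  have hceven : ∀ m : ℤ, c (-m) = c m := fun m => by simp [hc]
  refine ⟨∑ m ∈ B, Polynomial.C ((c m : ℝ) : ℂ) * Polynomial.Chebyshev.T ℂ m, ?_, ?_⟩
  · -- degree bound
    have : ∀ m ∈ B, (Polynomial.C ((c m : ℝ) : ℂ) * Polynomial.Chebyshev.T ℂ m).natDegree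
        ≤ m0 - 1 := by
      intro m hm
      refine (Polynomial.natDegree_C_mul_le _ _).trans ?_
      have hms : m.natAbs ≤ m0 - 1 := by
        simp only [hB, Finset.mem_Icc] at hm; omega
      have hT : Polynomial.Chebyshev.T ℂ m = Polynomial.Chebyshev.T ℂ (m.natAbs : ℤ) := by
        rcases Int.natAbs_eq m with h | h
        · rw [← h]
        · conv_lhs => rw [h]
          rw [Polynomial.Chebyshev.T_neg]
      rw [hT]
      exact (natDegree_T_le _).trans hms
    refine lt_of_le_of_lt (Polynomial.natDegree_sum_le_of_forall_le _ _ this) ?_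
    omega
  intro x hx
  set θ := Real.arccos x with hθ
  have hcosθ : Real.cos θ = x :=
    Real.cos_arccos (by linarith [(abs_le.1 hx).1]) (by linarith [(abs_le.1 hx).2])
  set u : ℂ := Complex.exp (θ * Complex.I) with hu
  have huinv : Complex.exp (-(θ * Complex.I)) = u⁻¹ := by
    rw [hu, ← Complex.exp_neg]
  have huu : u * u⁻¹ = 1 := by
    rw [hu, ← Complex.exp_neg, ← Complex.exp_add]; simp
  set fA : ℕ → ℂ := fun a => (-(z:ℂ) * u) ^ a / a.factorial with hfA
  set fB : ℕ → ℂ := fun b => (-(z:ℂ) * u⁻¹) ^ b / b.factorial with hfB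
  have hnorm : ∀ (w : ℂ), ‖w‖ = 1 → ∀ a : ℕ,
      ‖(-(z:ℂ) * w) ^ a / a.factorial‖ = z ^ a / a.factorial := by
    intro w hw a
    rw [norm_div, norm_pow, norm_mul, norm_neg]
    simp [hw, Complex.norm_real, abs_of_pos hz,
      Complex.norm_natCast]
  have habsu : ‖u‖ = 1 := Complex.norm_exp_ofReal_mul_I θ
  have habsuinv : ‖u⁻¹‖ = 1 := by rw [norm_inv, habsu]; norm_num
  have hsumA : Summable fun a => ‖fA a‖ := by
    simp only [hfA, hnorm u habsu]
    exact Real.summable_pow_div_factorial z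
  have hsumB : Summable fun b => ‖fB b‖ := by
    simp only [hfB, hnorm u⁻¹ habsuinv]
    exact Real.summable_pow_div_factorial z
  set g : ℕ × ℕ → ℂ := fun p => fA p.1 * fB p.2 with hg
  have hgsum : Summable g := by
    refine Summable.of_norm ?_
    have := hsumA.mul_norm hsumB
    simpa [hg] using this
  have E1 : Complex.exp (((-(2*z) * x : ℝ) : ℂ)) = ∑' p : ℕ × ℕ, g p := by
    have hexp : ∀ w : ℂ, Complex.exp w = ∑' a : ℕ, w ^ a / a.factorial := fun w => by
      rw [Complex.exp_eq_exp_ℂ, NormedSpace.exp_eq_tsum_div]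
    have E0 : Complex.exp (((-(2*z) * x : ℝ) : ℂ)) = Complex.exp (-(z:ℂ)*u) *
        Complex.exp (-(z:ℂ)*u⁻¹) := by
      rw [← Complex.exp_add]
      congr 1
      have h2c : u + u⁻¹ = 2 * Complex.cos θ := by
        rw [hu, ← Complex.exp_neg, Complex.cos]
        ring_nf
      calc ((-(2*z) * x : ℝ) : ℂ) = -(z:ℂ) * (2 * Complex.cos θ) := by
            rw [← hcosθ, ← Complex.ofReal_cos]; push_cast; ring
        _ = -(z:ℂ) * u + -(z:ℂ) * u⁻¹ := by rw [← h2c]; ring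
    rw [E0, hexp, hexp]
    exact tsum_mul_tsum_of_summable_norm hsumA hsumB
  set φ : ℤ → ℂ := fun m => ((c m : ℝ) : ℂ) * Complex.exp (m * θ * Complex.I) with hφ
  have key : ∀ (m : ℤ) (b : ℕ), g (pairEquiv (m, b)) =
      (((-1:ℝ) ^ m.natAbs *
        (z ^ (m.natAbs + 2*b) / (b.factorial * (b + m.natAbs).factorial)) : ℝ) : ℂ)
        * Complex.exp (m * θ * Complex.I) := by
    intro m b
    rcases Int.eq_nat_or_neg m with ⟨s, rfl | rfl⟩
    · have hp : pairEquiv ((s:ℤ), b) = (b + s, b) := by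
        simp [pairEquiv]
      rw [hp]
      have h1 : g (b + s, b) = ((-(z:ℂ) * u) ^ (b + s) / (b + s).factorial) *
          ((-(z:ℂ) * u⁻¹) ^ b / b.factorial) := rfl
      rw [h1, prod_term z u huu s b]
      have h2 : u ^ s = Complex.exp (((s:ℤ) : ℂ) * θ * Complex.I) := by
        rw [hu, ← Complex.exp_nat_mul]
        congr 1
        push_cast
        ring
      rw [h2]
      norm_num
    · have hp : pairEquiv (-(s:ℤ), b) = (b, b + s) := by
        simp [pairEquiv]
      rw [hp]
      have huu' : u⁻¹ * (u⁻¹)⁻¹ = 1 := by rw [inv_inv, mul_comm]; exact huu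
      have h1 : g (b, b + s) = ((-(z:ℂ) * u⁻¹) ^ (b + s) / (b + s).factorial) *
          ((-(z:ℂ) * (u⁻¹)⁻¹) ^ b / b.factorial) := by
        rw [inv_inv]
        show fA b * fB (b+s) = _
        rw [hfA, hfB]
        ring
      rw [h1, prod_term z u⁻¹ huu' s b]
      have h2 : (u⁻¹) ^ s = Complex.exp (((-(s:ℤ)) : ℂ) * θ * Complex.I) := by
        rw [hu, ← Complex.exp_neg, ← Complex.exp_nat_mul]
        congr 1
        push_cast
        ring
      rw [h2]
      norm_num
  have E3 : ∀ m : ℤ, ∑' b : ℕ, g (pairEquiv (m, b)) = φ m := by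
    intro m
    simp_rw [key m]
    rw [tsum_mul_right]
    congr 1
    rw [← Complex.ofReal_tsum]
    congr 1
    rw [hc]
    simp only
    rw [tsum_mul_left]
    rfl
  have hnφ : ∀ m : ℤ, ‖φ m‖ = Ibes z m.natAbs := by
    intro m
    rw [hφ]
    simp only
    rw [norm_mul]
    have h1 : ‖Complex.exp (m * θ * Complex.I)‖ = 1 := by
      have h : (m : ℂ) * θ * Complex.I = ((m * θ : ℝ) : ℂ) * Complex.I := by push_cast; ring
      rw [h, Complex.norm_exp_ofReal_mul_I]
    rw [h1, mul_one, Complex.norm_real, Real.norm_eq_abs, hc]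
    simp only
    rw [abs_mul, abs_pow, abs_neg, abs_one, one_pow, one_mul,
      abs_of_nonneg (Ibes_nonneg z hz.le _)]
  have hφs : Summable φ := by
    apply Summable.of_norm
    have hb : ∀ m : ℤ, ‖φ m‖ ≤ Real.exp (z^2) * (z ^ m.natAbs / m.natAbs.factorial) := by
      intro m
      rw [hnφ]
      calc Ibes z m.natAbs ≤ z ^ m.natAbs / m.natAbs.factorial * Real.exp (z^2) :=
            Ibes_le' z hz.le _
        _ = Real.exp (z^2) * (z ^ m.natAbs / m.natAbs.factorial) := by ring
    apply Summable.of_nonneg_of_le (fun m => norm_nonneg _) hb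
    apply Summable.of_nat_of_neg
    · simpa using ((Real.summable_pow_div_factorial z).mul_left (Real.exp (z^2)))
    · simpa using ((Real.summable_pow_div_factorial z).mul_left (Real.exp (z^2)))
  have E4 : Complex.exp (((-(2*z) * x : ℝ) : ℂ)) =
      (∑ m ∈ B, φ m) + ∑' (i : ↑((↑B : Set ℤ)ᶜ)), φ ↑i := by
    have hgsum' : Summable (fun p : ℤ × ℕ => g (pairEquiv p)) :=
      (pairEquiv.summable_iff (f := g)).2 hgsum
    rw [E1, ← Equiv.tsum_eq pairEquiv g]
    rw [Summable.tsum_prod' (f := fun p : ℤ × ℕ => g (pairEquiv p)) hgsum'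
      (fun m => hgsum'.prod_factor m)]
    have : ∀ m : ℤ, ∑' b : ℕ, g (pairEquiv (m, b)) = φ m := E3
    rw [tsum_congr this]
    rw [← Summable.tsum_subtype_add_tsum_subtype_compl hφs ↑B]
    congr 1
    exact Finset.tsum_subtype B φ
  have hcos2 : ∀ m : ℤ, Complex.exp (m * θ * Complex.I) + Complex.exp (-(m * θ * Complex.I))
      = 2 * Complex.cos ((m : ℂ) * θ) := by
    intro m
    rw [Complex.cos]
    ring_nf
  have hflip : ∑ m ∈ B, (((c m : ℝ) : ℂ)) * Complex.exp (-(m * θ * Complex.I))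
      = ∑ m ∈ B, φ m := by
    have hBneg : B.image (fun m => -m) = B := by
      ext m
      simp only [Finset.mem_image, hB, Finset.mem_Icc]
      constructor
      · rintro ⟨a, ⟨h1, h2⟩, rfl⟩; omega
      · intro h; exact ⟨-m, by omega, by ring⟩
    conv_rhs => rw [← hBneg]
    rw [Finset.sum_image (by intro a _ b _ h; simp only [neg_inj] at h; omega)]
    apply Finset.sum_congr rfl
    intro m hm
    rw [hφ]
    simp only
    rw [hceven]
    congr 2
    push_cast
    ring
  have E5 : ∑ m ∈ B, φ m =
      Polynomial.eval ((x : ℝ) : ℂ)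
        (∑ m ∈ B, Polynomial.C ((c m : ℝ) : ℂ) * Polynomial.Chebyshev.T ℂ m) := by
    have h1 : ∑ m ∈ B, φ m = ∑ m ∈ B, ((c m : ℝ) : ℂ) * Complex.cos ((m:ℂ) * θ) := by
      calc ∑ m ∈ B, φ m
          = (∑ m ∈ B, φ m + ∑ m ∈ B, (((c m : ℝ) : ℂ)) * Complex.exp (-(m * θ * Complex.I))) / 2 := by
            rw [hflip]; ring
        _ = ∑ m ∈ B, ((c m : ℝ) : ℂ) * Complex.cos ((m:ℂ) * θ) := by
            rw [← Finset.sum_add_distrib, Finset.sum_div]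
            apply Finset.sum_congr rfl
            intro m hm
            rw [hφ]
            simp only
            rw [← mul_add, hcos2]
            ring
    rw [h1, Polynomial.eval_finset_sum]
    apply Finset.sum_congr rfl
    intro m hm
    rw [Polynomial.eval_mul, Polynomial.eval_C]
    congr 1
    rw [← hcosθ, Complex.ofReal_cos, Polynomial.Chebyshev.T_complex_cos]
  -- tail bound
  set gf : ℤ → ℝ := fun m => if m0 ≤ m.natAbs then Ibes z m.natAbs else 0 with hgf
  set u' : ℕ → ℝ := fun n => if m0 ≤ n then Ibes z n else 0 with hu'
  have hgfnat : ∀ n : ℕ, gf (n : ℤ) = u' n := by intro n; simp [hgf, hu']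
  have hgfneg : ∀ n : ℕ, gf (-(n : ℤ)) = u' n := by intro n; simp [hgf, hu']
  have hgfneg1 : ∀ n : ℕ, gf (-((n : ℤ)+1)) = u' (n+1) := by
    intro n
    have : (-((n : ℤ)+1)) = -(((n+1 : ℕ) : ℤ)) := by push_cast; ring
    rw [this, hgfneg]
  have hu'w : ∀ n : ℕ, u' n ≤ Real.exp (z/2) * (z ^ n / n.factorial) := by
    intro n
    rw [hu']
    simp only
    split_ifs with h
    · calc Ibes z n ≤ z ^ n / n.factorial * Real.exp (z/2) := by
            apply Ibes_le z hz.le n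
            have : (m0 : ℝ) ≤ (n : ℝ) := by exact_mod_cast h
            linarith
        _ = Real.exp (z/2) * (z ^ n / n.factorial) := by ring
    · positivity
  have hu'nonneg : ∀ n : ℕ, 0 ≤ u' n := by
    intro n
    rw [hu']
    simp only
    split_ifs
    · exact Ibes_nonneg z hz.le n
    · exact le_refl 0
  have hsu' : Summable u' :=
    Summable.of_nonneg_of_le hu'nonneg hu'w
      ((Real.summable_pow_div_factorial z).mul_left _)
  have hsgf : Summable gf := by
    apply Summable.of_nat_of_neg
    · simpa [hgfnat] using hsu'
    · simpa [hgfneg] using hsu'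
  have hVtail : ∑' n : ℕ, u' n ≤ Real.exp (z/2) * (2 * (z ^ m0 / m0.factorial)) := by
    have h1 : ∑' n : ℕ, u' n ≤ ∑' n : ℕ, Real.exp (z/2) * (if m0 ≤ n then z ^ n / n.factorial else 0) := by
      have hite : Summable (fun n : ℕ => (if m0 ≤ n then z ^ n / n.factorial else 0 : ℝ)) := by
        apply Summable.of_nonneg_of_le (fun n => ?_) (fun n => ?_)
          (Real.summable_pow_div_factorial z)
        · split_ifs <;> positivity
        · split_ifs with h
          · exact le_refl _
          · positivity
      apply Summable.tsum_le_tsum _ hsu' (hite.mul_left _)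
      intro n
      rw [hu']
      simp only
      split_ifs with h
      · have h2z : 2 * z ≤ (n : ℝ) + 1 := by
          have : (m0:ℝ) ≤ n := by exact_mod_cast h
          linarith
        calc Ibes z n ≤ z ^ n / n.factorial * Real.exp (z/2) := Ibes_le z hz.le n h2z
          _ = Real.exp (z/2) * (z ^ n / n.factorial) := by ring
      · simp
    have h2 : ∑' n : ℕ, (if m0 ≤ n then z ^ n / n.factorial else 0 : ℝ)
        = ∑' j : ℕ, z ^ (m0 + j) / (m0 + j).factorial := by
      rw [← Function.Injective.tsum_eq (f := fun n : ℕ => (if m0 ≤ n then z ^ n / n.factorial else 0 : ℝ))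
        (g := fun j : ℕ => m0 + j) (fun a b h => by simp only [] at h; omega)]
      · apply tsum_congr
        intro j
        simp
      · intro n hn
        simp only [Function.mem_support] at hn
        have : m0 ≤ n := by by_contra hcon; rw [if_neg hcon] at hn; exact hn rfl
        exact ⟨n - m0, by simp only []; omega⟩
    rw [tsum_mul_left] at h1
    refine h1.trans ?_
    rw [h2]
    exact mul_le_mul_of_nonneg_left (tail_le z hz.le m0 hzm) (by positivity)
  have hmem : ∀ i : ↑((↑B : Set ℤ)ᶜ), m0 ≤ (i : ℤ).natAbs := by
    intro i
    have h := i.2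
    simp only [Set.mem_compl_iff, Finset.coe_Icc, Set.mem_Icc, hB, not_and_or, not_le] at h
    omega
  have hsub : Summable fun i : ↑((↑B : Set ℤ)ᶜ) => ‖φ (i : ℤ)‖ :=
    summable_norm_iff.mpr (hφs.subtype _)
  have hterm : ∀ i : ↑((↑B : Set ℤ)ᶜ), ‖φ (i : ℤ)‖ ≤ gf (i : ℤ) := by
    intro i
    rw [hnφ, hgf]
    simp only
    rw [if_pos (hmem i)]
  have E6 : ‖∑' (i : ↑((↑B : Set ℤ)ᶜ)), φ ↑i‖ ≤ 4 * Real.exp (z / 2) * (z ^ m0 / m0.factorial) := by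
    calc ‖∑' (i : ↑((↑B : Set ℤ)ᶜ)), φ ↑i‖ ≤ ∑' (i : ↑((↑B : Set ℤ)ᶜ)), ‖φ ↑i‖ :=
          norm_tsum_le_tsum_norm hsub
      _ ≤ ∑' m : ℤ, gf m := by
          exact Summable.tsum_le_tsum_of_inj (f := fun i : ↑((↑B : Set ℤ)ᶜ) => ‖φ (i : ℤ)‖) (g := gf)
            (fun i => (i : ℤ)) Subtype.val_injective
            (fun c _ => by rw [hgf]; simp only; split_ifs; exacts [Ibes_nonneg z hz.le _, le_refl 0])
            (fun i => hterm i) hsub hsgf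
      _ = (∑' n : ℕ, gf (n : ℤ)) + ∑' n : ℕ, gf (-((n : ℤ)+1)) := by
          apply tsum_of_nat_of_neg_add_one
          · exact Summable.congr hsu' (fun n => (hgfnat n).symm)
          · exact Summable.congr ((summable_nat_add_iff 1).mpr hsu')
              (fun n => (hgfneg1 n).symm)
      _ = (∑' n : ℕ, u' n) + ∑' n : ℕ, u' (n+1) := by
          rw [tsum_congr hgfnat, tsum_congr hgfneg1]
      _ ≤ (∑' n : ℕ, u' n) + ∑' n : ℕ, u' n := by
          apply add_le_add_right
          apply Summable.tsum_le_tsum_of_inj (fun n => n + 1) (fun a b h => by simp only [] at h; omega)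
            (fun c _ => hu'nonneg c) (fun n => le_refl _)
            ((summable_nat_add_iff 1).mpr hsu') hsu'
      _ ≤ 2 * (Real.exp (z/2) * (2 * (z ^ m0 / m0.factorial))) := by
          rw [two_mul]
          exact add_le_add hVtail hVtail
      _ = 4 * Real.exp (z / 2) * (z ^ m0 / m0.factorial) := by ring
  have Efinal : Complex.exp (((-(2 * z) * x : ℝ) : ℂ)) -
      Polynomial.eval ((x : ℝ) : ℂ)
        (∑ m ∈ B, Polynomial.C ((c m : ℝ) : ℂ) * Polynomial.Chebyshev.T ℂ m)
      = ∑' (i : ↑((↑B : Set ℤ)ᶜ)), φ ↑i := by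
    rw [E4, ← E5]
    ring
  rw [Efinal]
  exact E6

lemma pow_div_factorial_le_exp (y : ℝ) (hy : 0 < y) (m : ℕ) (hm : 1 ≤ m) :
    y ^ m / m.factorial ≤ (Real.exp 1 * y / m) ^ m := by
  have hmr : (0:ℝ) < m := by exact_mod_cast hm
  have key : (m:ℝ) ^ m / m.factorial ≤ Real.exp 1 ^ m := by
    have h1 : (m:ℝ) ^ m / m.factorial ≤ Real.exp m := by
      rw [Real.exp_eq_exp_ℝ, NormedSpace.exp_eq_tsum_div]
      exact Summable.le_tsum (Real.summable_pow_div_factorial (m:ℝ)) m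
        (fun b _ => by positivity)
    rw [← Real.exp_one_rpow (m:ℝ), Real.rpow_natCast] at h1
    exact h1
  have hrw : (Real.exp 1 * y / m) ^ m = Real.exp 1 ^ m * y ^ m / (m:ℝ) ^ m := by
    rw [div_pow, mul_pow]
  rw [hrw]
  rw [div_le_div_iff₀ (by positivity) (by positivity)]
  calc y ^ m * (m:ℝ) ^ m = ((m:ℝ) ^ m / m.factorial) * y ^ m * m.factorial := by
        field_simp
    _ ≤ Real.exp 1 ^ m * y ^ m * m.factorial := by
        apply mul_le_mul_of_nonneg_right (mul_le_mul_of_nonneg_right key (by positivity))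
          (by positivity)
    _ = Real.exp 1 ^ m * y ^ m * m.factorial := rfl

lemma rpow_anti_aux {z a b : ℝ} (hz : 0 < z) (hza : z ≤ a) (hab : a ≤ b) :
    (Real.exp 1 * z / b) ^ (b : ℝ) ≤ (Real.exp 1 * z / a) ^ (a : ℝ) := by
  have ha : 0 < a := lt_of_lt_of_le hz hza
  have hb : 0 < b := lt_of_lt_of_le ha hab
  set F : ℝ → ℝ := fun y => (1 + Real.log z) * y - y * Real.log y with hF
  have hanti : AntitoneOn F (Set.Ici z) := by
    apply antitoneOn_of_deriv_nonpos (convex_Ici z)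
    · apply ContinuousOn.sub (continuousOn_const.mul continuousOn_id)
      apply ContinuousOn.mul continuousOn_id
      apply ContinuousOn.log continuousOn_id
      intro y hy
      simp only [Set.mem_Ici, id] at *
      exact (lt_of_lt_of_le hz hy).ne'
    · intro y hy
      rw [interior_Ici] at hy
      have hy0 : 0 < y := lt_trans hz hy
      apply DifferentiableAt.differentiableWithinAt
      apply DifferentiableAt.sub ((differentiableAt_const _).mul differentiableAt_id)
      exact differentiableAt_id.mul (Real.differentiableAt_log hy0.ne')
    · intro y hy
      rw [interior_Ici] at hy
      have hy0 : 0 < y := lt_trans hz hy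
      have h1 : HasDerivAt (fun y : ℝ => y * Real.log y) (Real.log y + 1) y := by
        have h2 := (hasDerivAt_id y).mul (Real.hasDerivAt_log hy0.ne')
        simp only [one_mul, id_eq, mul_inv_cancel₀ hy0.ne'] at h2
        exact h2
      have h3 : HasDerivAt (fun y : ℝ => (1 + Real.log z) * y) (1 + Real.log z) y := by
        simpa using (hasDerivAt_id y).const_mul (1 + Real.log z)
      have hd : HasDerivAt F ((1 + Real.log z) - (Real.log y + 1)) y := h3.sub h1
      rw [hd.deriv]
      have h4 : Real.log z ≤ Real.log y := Real.log_le_log hz hy.le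
      linarith
  have hlog : ∀ y : ℝ, 0 < y → (Real.exp 1 * z / y) ^ (y : ℝ) = Real.exp (F y) := by
    intro y hy0
    rw [Real.rpow_def_of_pos (by positivity)]
    congr 1
    rw [Real.log_div (by positivity) hy0.ne', Real.log_mul (by positivity) hz.ne',
      Real.log_exp, hF]
    ring
  rw [hlog a ha, hlog b hb]
  exact Real.exp_le_exp.2 (hanti (Set.mem_Ici.2 hza) (Set.mem_Ici.2 (hza.trans hab)) hab)

lemma band_pow {n β : ℕ} (M : Matrix (Fin n) (Fin n) ℂ)
    (hband : ∀ i j : Fin n, (β : ℝ) < |((i : ℕ) : ℝ) - ((j : ℕ) : ℝ)| → M i j = 0) :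
    ∀ (j : ℕ) (k t : Fin n), ((j : ℝ) * β < |((k : ℕ) : ℝ) - ((t : ℕ) : ℝ)|) →
      (M ^ j) k t = 0 := by
  intro j
  induction j with
  | zero =>
    intro k t h
    simp only [pow_zero]
    have hkt : k ≠ t := by
      rintro rfl
      simp at h
    exact Matrix.one_apply_ne hkt
  | succ j ih =>
    intro k t h
    rw [pow_succ, Matrix.mul_apply]
    apply Finset.sum_eq_zero
    intro s _
    rcases le_or_gt |((k : ℕ) : ℝ) - ((s : ℕ) : ℝ)| ((j:ℝ) * β) with hk | hk
    · have hst : (β : ℝ) < |((s : ℕ) : ℝ) - ((t : ℕ) : ℝ)| := by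
        have tri : |((k : ℕ) : ℝ) - ((t : ℕ) : ℝ)| ≤
            |((k : ℕ) : ℝ) - ((s : ℕ) : ℝ)| + |((s : ℕ) : ℝ) - ((t : ℕ) : ℝ)| := by
          have := abs_sub_abs_le_abs_sub (((k:ℕ):ℝ) - ((s:ℕ):ℝ)) (((k:ℕ):ℝ) - ((t:ℕ):ℝ))
          calc |((k : ℕ) : ℝ) - ((t : ℕ) : ℝ)|
              = |(((k:ℕ):ℝ) - ((s:ℕ):ℝ)) + (((s:ℕ):ℝ) - ((t:ℕ):ℝ))| := by ring_nf
            _ ≤ _ := abs_add_le _ _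
        push_cast at h ⊢
        nlinarith
      rw [hband s t hst, mul_zero]
    · rw [ih k s hk, zero_mul]

lemma conjPow {n : ℕ} (U A : Matrix (Fin n) (Fin n) ℂ) (h : star U * U = 1)
    (h2 : U * star U = 1) (j : ℕ) :
    (U * A * star U) ^ j = U * A ^ j * star U := by
  induction j with
  | zero =>
    simp only [pow_zero, Matrix.mul_one, h2]
  | succ j ih =>
    rw [pow_succ, pow_succ, ih]
    calc U * A ^ j * star U * (U * A * star U)
        = U * A ^ j * (star U * U) * A * star U := by
          simp only [Matrix.mul_assoc]
      _ = U * (A ^ j * A) * star U := by rw [h, Matrix.mul_one]; simp only [Matrix.mul_assoc]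

lemma entry_bound {n : ℕ} (U : Matrix (Fin n) (Fin n) ℂ) (hU : U * star U = 1)
    (w : Fin n → ℂ) (Bd : ℝ) (hBd : ∀ i, ‖w i‖ ≤ Bd) (k t : Fin n) :
    ‖(U * Matrix.diagonal w * star U) k t‖ ≤ Bd := by
  have hBd0 : 0 ≤ Bd := le_trans (norm_nonneg _) (hBd k)
  have hentry : (U * Matrix.diagonal w * star U) k t
      = ∑ i, U k i * w i * star (U t i) := by
    rw [Matrix.mul_apply]
    apply Finset.sum_congr rfl
    intro i _
    rw [Matrix.mul_diagonal, Matrix.star_apply]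
  have hrow : ∀ r : Fin n, ∑ i, ‖U r i‖ ^ 2 = 1 := by
    intro r
    have h1 : (U * star U) r r = 1 := by rw [hU, Matrix.one_apply_eq]
    rw [Matrix.mul_apply] at h1
    have h2 : ∑ i, U r i * star (U r i) = 1 := by
      rw [← h1]
      apply Finset.sum_congr rfl
      intro i _
      rw [Matrix.star_apply]
    have h3 : ∑ i, ((‖U r i‖ ^ 2 : ℝ) : ℂ) = 1 := by
      rw [← h2]
      apply Finset.sum_congr rfl
      intro i _
      rw [Complex.star_def, Complex.mul_conj]
      norm_cast
      rw [Complex.sq_norm]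
    have h4 := congrArg Complex.re h3
    rw [Complex.re_sum] at h4
    simp only [Complex.ofReal_re] at h4
    simpa using h4
  rw [hentry]
  calc ‖∑ i, U k i * w i * star (U t i)‖
      ≤ ∑ i, ‖U k i * w i * star (U t i)‖ := norm_sum_le _ _
    _ ≤ ∑ i, ‖U k i‖ * Bd * ‖U t i‖ := by
        apply Finset.sum_le_sum
        intro i _
        rw [norm_mul, norm_mul]
        have h5 : ‖star (U t i)‖ = ‖U t i‖ := by
          rw [Complex.star_def, Complex.norm_conj]
        rw [h5]
        apply mul_le_mul_of_nonneg_right _ (norm_nonneg _)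
        exact mul_le_mul_of_nonneg_left (hBd i) (norm_nonneg _)
    _ = Bd * ∑ i, ‖U k i‖ * ‖U t i‖ := by
        rw [Finset.mul_sum]
        apply Finset.sum_congr rfl
        intro i _
        ring
    _ ≤ Bd * 1 := by
        apply mul_le_mul_of_nonneg_left _ hBd0
        have hcs := Finset.sum_mul_sq_le_sq_mul_sq Finset.univ
          (fun i => ‖U k i‖) (fun i => ‖U t i‖)
        rw [hrow k, hrow t] at hcs
        have hnn : (0:ℝ) ≤ ∑ i, ‖U k i‖ * ‖U t i‖ :=
          Finset.sum_nonneg fun i _ => by positivity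
        nlinarith
    _ = Bd := mul_one Bd

set_option maxHeartbeats 1600000 in
/-- Entrywise superexponential decay bound (regime ii) for the exponential of a banded
Hermitian positive semidefinite matrix: if `M` is `β`-banded with spectrum in `[0, 4ρ]`,
`τ > 0`, and the indices `k ≠ t` satisfy `|k - t|/β ≥ 2ρτ`, then
`|(exp (-τM))_{kt}| ≤ 10 (exp(-ρτ)/(ρτ)) (eρτβ/|k-t|)^{|k-t|/β}`. -/
theorem exp_banded_entry_bound_regime_two
    (n β : ℕ) (hβ : 0 < β) (M : Matrix (Fin n) (Fin n) ℂ) (ρ τ : ℝ)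
    (hρ : 0 < ρ) (hτ : 0 < τ)
    (hM : M.PosSemidef)
    (hspec : ∀ i, hM.1.eigenvalues i ∈ Set.Icc (0 : ℝ) (4 * ρ))
    (hband : ∀ i j : Fin n, (β : ℝ) < |((i : ℕ) : ℝ) - ((j : ℕ) : ℝ)| → M i j = 0)
    (k t : Fin n) (hkt : k ≠ t)
    (h2 : 2 * ρ * τ ≤ |((k : ℕ) : ℝ) - ((t : ℕ) : ℝ)| / β) :
    ‖(NormedSpace.exp (-(τ • M))) k t‖ ≤
      10 * (Real.exp (-(ρ * τ)) / (ρ * τ)) *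
        (Real.exp 1 * ρ * τ * β / |((k : ℕ) : ℝ) - ((t : ℕ) : ℝ)|) ^
          (|((k : ℕ) : ℝ) - ((t : ℕ) : ℝ)| / β) := by
  classical
  set d : ℝ := |((k : ℕ) : ℝ) - ((t : ℕ) : ℝ)| with hd
  have hβR : (0:ℝ) < β := by exact_mod_cast hβ
  have hd1 : 1 ≤ d := by
    have hne : ((k:ℕ) : ℤ) ≠ ((t:ℕ) : ℤ) := by
      simp only [Ne, Int.natCast_inj]
      intro h
      exact hkt (Fin.ext h)
    have h1 : (1:ℤ) ≤ |((k:ℕ) : ℤ) - ((t:ℕ) : ℤ)| := Int.one_le_abs (sub_ne_zero.2 hne)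
    have h2' : ((1:ℤ):ℝ) ≤ ((|((k:ℕ) : ℤ) - ((t:ℕ) : ℤ)| : ℤ) : ℝ) := by exact_mod_cast h1
    rw [hd]
    push_cast at h2'
    convert h2' using 2
  have hd0 : (0:ℝ) < d := lt_of_lt_of_le one_pos hd1
  set z := ρ * τ with hz'
  have hz : 0 < z := mul_pos hρ hτ
  set x := d / (β:ℝ) with hx'
  have hx0 : 0 < x := div_pos hd0 hβR
  have h2zx : 2 * z ≤ x := by
    calc 2 * z = 2 * ρ * τ := by rw [hz']; ring
      _ ≤ x := h2
  have hzx : z ≤ x := by linarith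
  set m0 := ⌈x⌉₊ with hm0'
  have hm01 : 1 ≤ m0 := Nat.one_le_iff_ne_zero.mpr (Nat.ceil_pos.mpr hx0).ne'
  have hxm0 : x ≤ (m0:ℝ) := Nat.le_ceil x
  have hm0x : (m0:ℝ) < x + 1 := Nat.ceil_lt_add_one hx0.le
  have h2zm0 : 2 * z ≤ (m0:ℝ) := h2zx.trans hxm0
  obtain ⟨P, hPdeg, hPb⟩ := scalar_cheb z hz m0 hm01 h2zm0
  set Q : Polynomial ℂ := Polynomial.C (Complex.exp ((-(2*z) : ℝ) : ℂ)) *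
    P.comp (Polynomial.C ((1/(2*ρ) : ℝ) : ℂ) * Polynomial.X - 1) with hQ
  have hQdeg : Q.natDegree < m0 := by
    have h1 : (Polynomial.C ((1/(2*ρ):ℝ):ℂ) * Polynomial.X - 1).natDegree ≤ 1 := by
      refine (Polynomial.natDegree_sub_le _ _).trans (max_le ?_ ?_)
      · exact (Polynomial.natDegree_C_mul_le _ _).trans (by simp)
      · simp
    calc Q.natDegree ≤ (P.comp (Polynomial.C ((1/(2*ρ):ℝ):ℂ) * Polynomial.X - 1)).natDegree :=
          Polynomial.natDegree_C_mul_le _ _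
      _ ≤ P.natDegree * (Polynomial.C ((1/(2*ρ):ℝ):ℂ) * Polynomial.X - 1).natDegree :=
          Polynomial.natDegree_comp_le
      _ ≤ P.natDegree * 1 := Nat.mul_le_mul_left _ h1
      _ = P.natDegree := mul_one _
      _ < m0 := hPdeg
  set Bd : ℝ := Real.exp (-(2*z)) * (4 * Real.exp (z/2) * (z^m0 / m0.factorial)) with hBd'
  have hQval : ∀ l : ℝ, 0 ≤ l → l ≤ 4*ρ →
      ‖Complex.exp (((-(τ * l) : ℝ)) : ℂ) - Q.eval ((l : ℝ) : ℂ)‖ ≤ Bd := by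
    intro l hl0 hl4
    set y : ℝ := l/(2*ρ) - 1 with hy'
    have hy1 : |y| ≤ 1 := by
      rw [abs_le]
      constructor
      · have h0 : 0 ≤ l / (2*ρ) := by positivity
        rw [hy']; linarith
      · have h0 : l / (2*ρ) ≤ 2 := by
          rw [div_le_iff₀ (by positivity)]; linarith
        rw [hy']; linarith
    have hQe : Q.eval ((l:ℝ):ℂ) = Complex.exp ((-(2*z) : ℝ) : ℂ) * P.eval ((y : ℝ) : ℂ) := by
      rw [hQ, Polynomial.eval_mul, Polynomial.eval_C, Polynomial.eval_comp]
      congr 2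
      rw [Polynomial.eval_sub, Polynomial.eval_mul, Polynomial.eval_C, Polynomial.eval_X,
        Polynomial.eval_one, hy']
      push_cast
      ring
    have hsplit : Complex.exp (((-(τ * l) : ℝ)) : ℂ) =
        Complex.exp ((-(2*z) : ℝ) : ℂ) * Complex.exp (((-(2*z) * y : ℝ)) : ℂ) := by
      rw [← Complex.exp_add]
      congr 1
      have hr : (-(τ * l) : ℝ) = (-(2*z)) + (-(2*z) * y) := by
        rw [hy', hz']
        field_simp
        ring
      rw [hr]
      push_cast
      ring
    rw [hsplit, hQe, ← mul_sub, norm_mul]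
    have habs : ‖Complex.exp ((-(2*z) : ℝ) : ℂ)‖ = Real.exp (-(2*z)) :=
      Complex.norm_exp_ofReal _
    rw [habs, hBd']
    exact mul_le_mul_of_nonneg_left (hPb y hy1) (Real.exp_nonneg _)
  -- matrix part
  have hH := hM.1
  set U : Matrix (Fin n) (Fin n) ℂ := ↑hH.eigenvectorUnitary with hU'
  have hUmem := hH.eigenvectorUnitary.2
  rw [Unitary.mem_iff] at hUmem
  have hU2 : star U * U = 1 := hUmem.1
  have hU1 : U * star U = 1 := hUmem.2
  set ev : Fin n → ℝ := hH.eigenvalues with hev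
  set D : Fin n → ℂ := RCLike.ofReal ∘ ev with hD'
  have hspecM : M = U * Matrix.diagonal D * star U := hH.spectral_theorem
  have hDi : ∀ i, D i = ((ev i : ℝ) : ℂ) := fun i => rfl
  have hexpM : NormedSpace.exp (-(τ • M)) =
      U * Matrix.diagonal (fun i => Complex.exp (((-(τ * ev i) : ℝ)) : ℂ)) * star U := by
    have harg : -(τ • M) = U * Matrix.diagonal (fun i => (((-(τ * ev i) : ℝ)) : ℂ)) * star U := by
      rw [hspecM]
      have h1 : τ • (U * Matrix.diagonal D * star U) =
          U * (τ • Matrix.diagonal D) * star U := by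
        rw [Matrix.mul_smul, Matrix.smul_mul]
      rw [h1]
      have h2 : -(U * (τ • Matrix.diagonal D) * star U) =
          U * (-(τ • Matrix.diagonal D)) * star U := by
        simp only [Matrix.mul_neg, Matrix.neg_mul]
      rw [h2]
      congr 1
      congr 1
      have h3 : -(τ • Matrix.diagonal D) = Matrix.diagonal (-(τ • D)) := by
        ext i j
        by_cases hij : i = j
        · subst hij
          simp
        · simp [Matrix.diagonal_apply_ne _ hij]
      have h4 : -(τ • D) = (fun i => (((-(τ * ev i) : ℝ)) : ℂ)) := by
        funext i
        simp only [Pi.neg_apply, Pi.smul_apply, hDi, Complex.real_smul]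
        push_cast
        ring
      rw [h3, h4]
    rw [harg]
    have hUu : ∀ A : Matrix (Fin n) (Fin n) ℂ,
        NormedSpace.exp (U * A * star U) = U * NormedSpace.exp A * star U := by
      intro A
      let Uu : (Matrix (Fin n) (Fin n) ℂ)ˣ := ⟨U, star U, hU1, hU2⟩
      exact Matrix.exp_units_conj Uu A
    have hdiag2 : NormedSpace.exp (fun i => (((-(τ * ev i) : ℝ)) : ℂ)) =
        fun i => Complex.exp (((-(τ * ev i) : ℝ)) : ℂ) := by
      rw [Pi.exp_def]
      funext i
      rw [← Complex.exp_eq_exp_ℂ]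
    rw [hUu, Matrix.exp_diagonal, hdiag2]
  set w : Fin n → ℂ :=
    fun i => Complex.exp (((-(τ * ev i) : ℝ)) : ℂ) - Q.eval ((ev i : ℝ) : ℂ) with hw'
  set N : Matrix (Fin n) (Fin n) ℂ := ∑ j ∈ Finset.range m0, Q.coeff j • M ^ j with hN
  have hNkt : N k t = 0 := by
    rw [hN, Matrix.sum_apply]
    apply Finset.sum_eq_zero
    intro j hj
    rw [Matrix.smul_apply, band_pow M hband j k t ?_, smul_zero]
    have hjm : j + 1 ≤ m0 := Finset.mem_range.mp hj
    have hj' : (j:ℝ) ≤ (m0:ℝ) - 1 := by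
      have : ((j:ℕ):ℝ) + 1 ≤ ((m0:ℕ):ℝ) := by exact_mod_cast hjm
      linarith
    have hjx : (j:ℝ) < x := by linarith
    calc (j:ℝ) * β < x * β := mul_lt_mul_of_pos_right hjx hβR
      _ = d := by rw [hx', div_mul_cancel₀ _ (ne_of_gt hβR)]
  have hNdiag : N = U * Matrix.diagonal (fun i => Q.eval (D i)) * star U := by
    have hMj : ∀ j : ℕ, M ^ j = U * Matrix.diagonal (D ^ j) * star U := by
      intro j
      rw [hspecM, conjPow U _ hU2 hU1 j, Matrix.diagonal_pow]
    rw [hN]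
    calc ∑ j ∈ Finset.range m0, Q.coeff j • M ^ j
        = ∑ j ∈ Finset.range m0, U * (Q.coeff j • Matrix.diagonal (D ^ j)) * star U := by
          apply Finset.sum_congr rfl
          intro j _
          rw [hMj j, Matrix.mul_smul, Matrix.smul_mul]
      _ = U * (∑ j ∈ Finset.range m0, Q.coeff j • Matrix.diagonal (D ^ j)) * star U := by
          rw [Finset.mul_sum, Finset.sum_mul]
      _ = U * Matrix.diagonal (fun i => Q.eval (D i)) * star U := by
          congr 2
          ext i i'
          rw [Matrix.sum_apply]
          by_cases hii : i = i'
          · subst hii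
            simp only [Matrix.smul_apply, Matrix.diagonal_apply_eq, Pi.pow_apply, smul_eq_mul]
            rw [Polynomial.eval_eq_sum_range' hQdeg]
          · simp only [Matrix.smul_apply, Matrix.diagonal_apply_ne _ hii, smul_eq_mul,
              mul_zero, Finset.sum_const_zero]
  have hdiff : NormedSpace.exp (-(τ • M)) = N + U * Matrix.diagonal w * star U := by
    rw [hexpM, hNdiag]
    have hcomb : U * Matrix.diagonal (fun i => Q.eval (D i)) * star U +
        U * Matrix.diagonal w * star U =
        U * Matrix.diagonal (fun i => Q.eval (D i) + w i) * star U := by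
      rw [← Matrix.diagonal_add, ← Matrix.add_mul, ← Matrix.mul_add]
    have hfun : (fun i => Q.eval (D i) + w i) =
        fun i => Complex.exp (((-(τ * ev i) : ℝ)) : ℂ) := by
      funext i
      have hDD : Q.eval (D i) = Q.eval ((ev i : ℝ) : ℂ) := rfl
      simp only [hw', hDD]
      ring
    rw [hcomb, hfun]
  have hentry : (NormedSpace.exp (-(τ • M))) k t = (U * Matrix.diagonal w * star U) k t := by
    rw [hdiff, Matrix.add_apply, hNkt, zero_add]
  rw [hentry]
  have hwB : ∀ i, ‖w i‖ ≤ Bd := by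
    intro i
    rw [hw']
    exact hQval (ev i) (hspec i).1 (hspec i).2
  refine (entry_bound U hU1 w Bd hwB k t).trans ?_
  -- numeric chain
  have hEq : Real.exp 1 * ρ * τ * β / d = Real.exp 1 * z / x := by
    have h6 : Real.exp 1 * z / x = Real.exp 1 * z * β / d := by
      rw [hx', div_div_eq_mul_div]
    rw [h6, hz']
    ring
  have hchain : z ^ m0 / m0.factorial ≤ (Real.exp 1 * z / x) ^ x := by
    calc z ^ m0 / m0.factorial ≤ (Real.exp 1 * z / m0) ^ m0 :=
          pow_div_factorial_le_exp z hz m0 hm01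
      _ = (Real.exp 1 * z / m0) ^ ((m0:ℕ):ℝ) := (Real.rpow_natCast _ _).symm
      _ ≤ (Real.exp 1 * z / x) ^ x := rpow_anti_aux hz hzx hxm0
  have hconst : 4 * Real.exp (-(2*z)) * Real.exp (z/2) ≤ 10 * (Real.exp (-z) / z) := by
    have hexpz : z / 2 + 1 ≤ Real.exp (z/2) := Real.add_one_le_exp _
    have key : 4 * z ≤ 10 * Real.exp (z/2) := by nlinarith
    have hmul : Real.exp (-(2*z)) * Real.exp (z/2) * Real.exp (z/2) = Real.exp (-z) := by
      rw [← Real.exp_add, ← Real.exp_add]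
      congr 1
      ring
    rw [mul_div_assoc', le_div_iff₀ hz]
    have hpos : 0 ≤ Real.exp (-(2*z)) * Real.exp (z/2) := by positivity
    have h5 := mul_le_mul_of_nonneg_right key hpos
    nlinarith [h5, hmul]
  have hrpow_nonneg : (0:ℝ) ≤ (Real.exp 1 * z / x) ^ x := by
    apply Real.rpow_nonneg
    positivity
  calc Bd = (4 * Real.exp (-(2*z)) * Real.exp (z/2)) * (z ^ m0 / m0.factorial) := by
        rw [hBd']; ring
    _ ≤ (10 * (Real.exp (-z) / z)) * (z ^ m0 / m0.factorial) := by
        apply mul_le_mul_of_nonneg_right hconst (by positivity)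
    _ ≤ (10 * (Real.exp (-z) / z)) * ((Real.exp 1 * z / x) ^ x) := by
        apply mul_le_mul_of_nonneg_left hchain (by positivity)
    _ = 10 * (Real.exp (-z) / z) * (Real.exp 1 * ρ * τ * β / d) ^ x := by
        rw [hEq]
end

section
/- Let M be an n×n Hermitian positive definite complex matrix that is β-banded, with smallest and largest eigenvalues λ_min and λ_max. Let M^{−1/2} denote the inverse of the unique Hermitian positive definite square root of M. Set κ₀ = λ_max/λ_min, C(0) = max{ 1/λ_min, (1 + √κ₀)²/(2λ_max) }, C₂ = max{ 1, (1 + (1/2)√κ₀)^{1/2} }, and q = (√λ_max − √λ_min)/(√λ_max + √λ_min). Then for all indices k and t, |(M^{−1/2})_{kt}| ≤ (2/π)·(C(0) + C₂)·q^{|k−t|/β}. -/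
open scoped ComplexOrder

/-- The square root of a positive semidefinite matrix, with its definition from the older Mathlib
(removed since). -/
noncomputable def Matrix.PosSemidef.sqrt {n 𝕜 : Type*} [Fintype n] [RCLike 𝕜] [DecidableEq n]
    {A : Matrix n n 𝕜} (hA : A.PosSemidef) : Matrix n n 𝕜 :=
  hA.1.eigenvectorUnitary.1 * Matrix.diagonal ((↑) ∘ (√·) ∘ hA.1.eigenvalues) *
    (star hA.1.eigenvectorUnitary : Matrix n n 𝕜)

open Polynomial Finset

namespace InvSqrtAux

/-- ratio recurrence for generalized binomial coefficients over ℝ -/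
lemma ring_choose_succ (r : ℝ) (j : ℕ) :
    Ring.choose r (j + 1) = Ring.choose r j * (r - j) / (j + 1) := by
  have h1 := Ring.descPochhammer_eq_factorial_smul_choose (R := ℝ) r (j + 1)
  have h2 := Ring.descPochhammer_eq_factorial_smul_choose (R := ℝ) r j
  rw [descPochhammer_succ_right, smeval_mul] at h1
  have hx : (X - (j : Polynomial ℤ)).smeval r = r - j := by
    simp [smeval_sub, smeval_X, smeval_natCast]
  rw [hx, h2] at h1
  have hfac : ((j + 1).factorial : ℝ) ≠ 0 := by exact_mod_cast (Nat.factorial_ne_zero _)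
  have : ((j + 1).factorial : ℝ) * Ring.choose r (j + 1)
      = (j.factorial : ℝ) * Ring.choose r j * (r - j) := by
    rw [← nsmul_eq_mul, ← h1, nsmul_eq_mul]
  rw [Nat.factorial_succ] at this hfac
  push_cast at this hfac ⊢
  have hj : ((j:ℝ) + 1) ≠ 0 := by positivity
  have hf : (j.factorial : ℝ) ≠ 0 := by exact_mod_cast Nat.factorial_ne_zero j
  have key : ((j:ℝ) + 1) * Ring.choose r (j + 1) * (j.factorial : ℝ)
      = Ring.choose r j * (r - j) * (j.factorial : ℝ) := by linear_combination this
  have key2 := mul_right_cancel₀ hf key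
  rw [eq_div_iff hj]
  linear_combination key2

lemma ring_choose_neg_one (k : ℕ) : Ring.choose (-1 : ℝ) k = (-1) ^ k := by
  induction k with
  | zero => simp [Ring.choose_zero_right]
  | succ j ih =>
      rw [ring_choose_succ, ih]
      have : ((j:ℝ) + 1) ≠ 0 := by positivity
      field_simp
      ring

/-- central-binomial-type coefficients -/
noncomputable def c (j : ℕ) : ℝ := (-1) ^ j * Ring.choose (-(1/2) : ℝ) j

lemma c_zero : c 0 = 1 := by simp [c, Ring.choose_zero_right]

lemma c_succ (j : ℕ) : c (j + 1) = c j * ((2 * j + 1) / (2 * j + 2)) := by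
  have h := ring_choose_succ (-(1/2) : ℝ) j
  have hj : ((j:ℝ) + 1) ≠ 0 := by positivity
  simp only [c, h]
  rw [pow_succ]
  field_simp
  ring

lemma c_nonneg (j : ℕ) : 0 ≤ c j := by
  induction j with
  | zero => rw [c_zero]; norm_num
  | succ j ih =>
      rw [c_succ]
      have : (0:ℝ) ≤ (2 * j + 1) / (2 * j + 2) := by positivity
      exact mul_nonneg ih this

lemma c_le_one (j : ℕ) : c j ≤ 1 := by
  induction j with
  | zero => rw [c_zero]
  | succ j ih =>
      rw [c_succ]
      have h1 : (2 * (j:ℝ) + 1) / (2 * j + 2) ≤ 1 := by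
        rw [div_le_one (by positivity)]; linarith
      calc c j * ((2 * j + 1) / (2 * j + 2)) ≤ 1 * 1 :=
            mul_le_mul ih h1 (by positivity) (by norm_num)
        _ = 1 := by norm_num

/-- Chu-Vandermonde: the coefficients `c` convolve to 1. -/
lemma c_antidiagonal_sum (k : ℕ) :
    ∑ ij ∈ Finset.HasAntidiagonal.antidiagonal k, c ij.1 * c ij.2 = 1 := by
  have hcomm : Commute (-(1/2) : ℝ) (-(1/2) : ℝ) := Commute.refl _
  have h := Ring.add_choose_eq (R := ℝ) (r := -(1/2)) (s := -(1/2)) k hcomm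
  have hsum : (-(1/2) : ℝ) + -(1/2) = -1 := by norm_num
  rw [hsum, ring_choose_neg_one] at h
  have : ∑ ij ∈ Finset.HasAntidiagonal.antidiagonal k, c ij.1 * c ij.2
      = (-1:ℝ)^k * ∑ ij ∈ Finset.HasAntidiagonal.antidiagonal k,
          Ring.choose (-(1/2):ℝ) ij.1 * Ring.choose (-(1/2):ℝ) ij.2 := by
    rw [Finset.mul_sum]
    refine Finset.sum_congr rfl ?_
    intro ij hij
    have hk : ij.1 + ij.2 = k := Finset.HasAntidiagonal.mem_antidiagonal.mp hij
    simp only [c]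
    rw [← hk, pow_add]
    ring
  rw [this, ← h]
  simp [← pow_add]


lemma chebyshev_T_natDegree_le (N : ℕ) : (Polynomial.Chebyshev.T ℝ (N : ℤ)).natDegree ≤ N := by
  induction N using Nat.strong_induction_on with
  | _ N ih =>
    match N with
    | 0 => simp [Polynomial.Chebyshev.T_zero]
    | 1 => simp [Polynomial.Chebyshev.T_one]
    | (N+2) =>
      have h1 := ih (N+1) (by omega)
      have h0 := ih N (by omega)
      have hcast : ((N+2 : ℕ) : ℤ) = ((N:ℤ)) + 2 := by push_cast; ring
      rw [hcast, Polynomial.Chebyshev.T_add_two]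
      refine le_trans (Polynomial.natDegree_sub_le _ _) (max_le ?_ (le_trans h0 (by omega)))
      refine le_trans Polynomial.natDegree_mul_le ?_
      have hX : (2 * Polynomial.X : Polynomial ℝ).natDegree ≤ 1 :=
        le_trans Polynomial.natDegree_mul_le (by simp)
      have h1' : (Polynomial.Chebyshev.T ℝ ((N:ℤ)+1)).natDegree ≤ N+1 := by
        have : ((N:ℤ)+1) = ((N+1:ℕ):ℤ) := by push_cast; ring
        rw [this]; exact h1
      omega

lemma summable_cq {q : ℝ} (h0 : 0 ≤ q) (h1 : q < 1) : Summable fun j => c j * q ^ j := by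
  refine Summable.of_nonneg_of_le (fun j => mul_nonneg (c_nonneg j) (pow_nonneg h0 j))
    (fun j => ?_) (summable_geometric_of_lt_one h0 h1)
  calc c j * q ^ j ≤ 1 * q ^ j :=
        mul_le_mul_of_nonneg_right (c_le_one j) (pow_nonneg h0 j)
    _ = q ^ j := one_mul _

lemma summable_cq_norm {q : ℝ} (h0 : 0 ≤ q) (h1 : q < 1) :
    Summable fun j => ‖c j * q ^ j‖ := by
  simpa only [Real.norm_eq_abs, abs_of_nonneg
    (mul_nonneg (c_nonneg _) (pow_nonneg h0 _))] using summable_cq h0 h1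

lemma tsum_cq_sq {q : ℝ} (h0 : 0 ≤ q) (h1 : q < 1) :
    (∑' j, c j * q ^ j) * (∑' j, c j * q ^ j) = (1 - q)⁻¹ := by
  rw [tsum_mul_tsum_eq_tsum_sum_antidiagonal_of_summable_norm
    (summable_cq_norm h0 h1) (summable_cq_norm h0 h1)]
  have : ∀ k : ℕ, ∑ ij ∈ Finset.HasAntidiagonal.antidiagonal k, (c ij.1 * q ^ ij.1) * (c ij.2 * q ^ ij.2)
      = q ^ k := by
    intro k
    have : ∀ ij ∈ Finset.HasAntidiagonal.antidiagonal k,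
        (c ij.1 * q ^ ij.1) * (c ij.2 * q ^ ij.2) = (c ij.1 * c ij.2) * q ^ k := by
      intro ij hij
      rw [← Finset.HasAntidiagonal.mem_antidiagonal.mp hij, pow_add]; ring
    rw [Finset.sum_congr rfl this, ← Finset.sum_mul, c_antidiagonal_sum, one_mul]
  rw [tsum_congr this, tsum_geometric_of_lt_one h0 h1]


noncomputable def lin (a b : ℝ) : Polynomial ℝ := C (2/(b-a)) * X + C (-(a+b)/(b-a))

noncomputable def chebTerm (a b q : ℝ) (pr : ℕ × ℕ) : Polynomial ℝ :=
  C ((-1:ℝ)^(pr.1+pr.2) * (c pr.1 * c pr.2) * q^(pr.1+pr.2)) *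
    ((Polynomial.Chebyshev.T ℝ ((pr.1 : ℤ) - (pr.2 : ℤ))).comp (lin a b))

noncomputable def Dset (m : ℕ) : Finset (ℕ × ℕ) :=
  (range (m+1) ×ˢ range (m+1)).filter (fun pr => pr.1 + pr.2 ≤ m)

noncomputable def approxPoly (a b q : ℝ) (m : ℕ) : Polynomial ℝ :=
  C (2/(Real.sqrt a + Real.sqrt b)) * ∑ pr ∈ Dset m, chebTerm a b q pr

lemma approxPoly_natDegree_le (a b q : ℝ) (m : ℕ) : (approxPoly a b q m).natDegree ≤ m := by
  refine le_trans Polynomial.natDegree_mul_le ?_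
  rw [Polynomial.natDegree_C, zero_add]
  refine Polynomial.natDegree_sum_le_of_forall_le _ _ ?_
  intro pr hpr
  have hm : pr.1 + pr.2 ≤ m := by
    simp only [Dset, Finset.mem_filter] at hpr; exact hpr.2
  unfold chebTerm
  refine le_trans Polynomial.natDegree_mul_le ?_
  rw [Polynomial.natDegree_C, zero_add]
  refine le_trans (Polynomial.natDegree_comp_le) ?_
  have h1 : (Polynomial.Chebyshev.T ℝ ((pr.1 : ℤ) - (pr.2 : ℤ))).natDegree
      ≤ ((pr.1 : ℤ) - (pr.2 : ℤ)).natAbs := by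
    rw [← Polynomial.Chebyshev.T_natAbs]
    exact chebyshev_T_natDegree_le _
  have h2 : (lin a b).natDegree ≤ 1 := Polynomial.natDegree_linear_le
  have h3 : ((pr.1 : ℤ) - (pr.2 : ℤ)).natAbs ≤ m := by omega
  calc (Polynomial.Chebyshev.T ℝ ((pr.1:ℤ) - pr.2)).natDegree * (lin a b).natDegree
      ≤ ((pr.1 : ℤ) - (pr.2 : ℤ)).natAbs * 1 := Nat.mul_le_mul h1 h2
    _ ≤ m := by omega

set_option maxHeartbeats 2000000 in
theorem scalar_approx (a b : ℝ) (ha : 0 < a) (hab : a < b) (m : ℕ) (x : ℝ)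
    (hx1 : a ≤ x) (hx2 : x ≤ b) :
    |1 / Real.sqrt x -
      (approxPoly a b ((Real.sqrt b - Real.sqrt a)/(Real.sqrt b + Real.sqrt a)) m).eval x|
    ≤ ((Real.sqrt b - Real.sqrt a)/(Real.sqrt b + Real.sqrt a)) ^ (m+1) / Real.sqrt a := by
  have hb : 0 < b := lt_trans ha hab
  set sa := Real.sqrt a with hsa_def
  set sb := Real.sqrt b with hsb_def
  have hsa : 0 < sa := Real.sqrt_pos.mpr ha
  have hsb : 0 < sb := Real.sqrt_pos.mpr hb
  have hsasb : sa < sb := Real.sqrt_lt_sqrt ha.le hab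
  have ha2 : sa^2 = a := Real.sq_sqrt ha.le
  have hb2 : sb^2 = b := Real.sq_sqrt hb.le
  set q : ℝ := (sb - sa)/(sb + sa) with hq_def
  have hss : 0 < sb + sa := by linarith
  have hq0 : 0 < q := div_pos (by linarith) hss
  have hq1 : q < 1 := by rw [div_lt_one hss]; linarith
  have hbma : 0 < b - a := by linarith
  set t : ℝ := (2*x - a - b)/(b-a) with ht_def
  have ht1 : -1 ≤ t := by rw [le_div_iff₀ hbma]; linarith
  have ht2 : t ≤ 1 := by rw [div_le_one hbma]; linarith
  set θ : ℝ := Real.arccos t with hθ_def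
  have hcost : Real.cos θ = t := Real.cos_arccos ht1 ht2
  have hsint : Real.sin θ ^ 2 = 1 - t^2 := by
    rw [hθ_def, Real.sin_arccos, Real.sq_sqrt (by nlinarith : (0:ℝ) ≤ 1 - t^2)]
  set z : ℂ := Complex.exp ((θ:ℂ) * Complex.I) with hz_def
  have hzre : z.re = Real.cos θ := Complex.exp_ofReal_mul_I_re θ
  have hzim : z.im = Real.sin θ := Complex.exp_ofReal_mul_I_im θ
  set w : ℂ := (q : ℂ) * z with hw_def
  have hznorm : ‖z‖ = 1 := by
    rw [hz_def, Complex.norm_exp_ofReal_mul_I]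
  have hwnorm : ‖w‖ = q := by
    rw [hw_def, norm_mul, hznorm, Complex.norm_real, Real.norm_eq_abs,
      abs_of_nonneg hq0.le, mul_one]
  have hnwnorm : ‖-w‖ = q := by rw [norm_neg, hwnorm]
  set w' : ℂ := (starRingEnd ℂ) w with hw'_def
  have hw'norm : ‖w'‖ = q := by rw [hw'_def, RCLike.norm_conj, hwnorm]
  have hnw'norm : ‖-w'‖ = q := by rw [norm_neg, hw'norm]
  set g : ℕ → ℂ := fun j => ((c j : ℝ) : ℂ) * (-w)^j with hg_def
  set g' : ℕ → ℂ := fun j => ((c j : ℝ) : ℂ) * (-w')^j with hg'_def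
  have hgnorm : (fun j => ‖g j‖) = fun j => c j * q ^ j := by
    funext j
    rw [hg_def, norm_mul, norm_pow, hnwnorm, Complex.norm_real, Real.norm_eq_abs,
      abs_of_nonneg (c_nonneg j)]
  have hg'norm : (fun j => ‖g' j‖) = fun j => c j * q ^ j := by
    funext j
    rw [hg'_def, norm_mul, norm_pow, hnw'norm, Complex.norm_real, Real.norm_eq_abs,
      abs_of_nonneg (c_nonneg j)]
  have hgs : Summable fun j => ‖g j‖ := by rw [hgnorm]; exact summable_cq hq0.le hq1
  have hg's : Summable fun j => ‖g' j‖ := by rw [hg'norm]; exact summable_cq hq0.le hq1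
  set G : ℂ := ∑' j, g j with hG_def
  -- star of G
  have hstarG : (starRingEnd ℂ) G = ∑' j, g' j := by
    have hjj : ∀ j, star (g j) = g' j := by
      intro j
      simp only [hg_def, hg'_def, star_mul', star_pow, star_neg, Complex.star_def,
        Complex.conj_ofReal]
      try ring
    rw [hG_def, starRingEnd_apply, tsum_star]
    exact tsum_congr hjj
  -- G * G = (1+w)⁻¹
  have hGG : G * G = (1 + w)⁻¹ := by
    rw [hG_def, tsum_mul_tsum_eq_tsum_sum_antidiagonal_of_summable_norm hgs hgs]
    have hinner : ∀ k : ℕ, ∑ ij ∈ Finset.HasAntidiagonal.antidiagonal k, g ij.1 * g ij.2 = (-w)^k := by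
      intro k
      have : ∀ ij ∈ Finset.HasAntidiagonal.antidiagonal k,
          g ij.1 * g ij.2 = ((c ij.1 * c ij.2 : ℝ) : ℂ) * (-w)^k := by
        intro ij hij
        rw [hg_def]
        simp only
        rw [← Finset.HasAntidiagonal.mem_antidiagonal.mp hij, pow_add]
        push_cast
        ring
      rw [Finset.sum_congr rfl this, ← Finset.sum_mul, ← Complex.ofReal_sum,
        c_antidiagonal_sum]
      simp
    rw [tsum_congr hinner, tsum_geometric_of_norm_lt_one (by rw [hnwnorm]; exact hq1),
      sub_neg_eq_add]
  set h : ℕ × ℕ → ℂ := fun pr => g pr.1 * g' pr.2 with hh_def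
  have hprod : ((Complex.normSq G : ℝ) : ℂ) = ∑' pr : ℕ × ℕ, h pr := by
    rw [← Complex.mul_conj, hstarG, hh_def, tsum_mul_tsum_of_summable_norm hgs hg's]
  -- 1 + w ≠ 0
  have h1w : (1 : ℂ) + w ≠ 0 := by
    intro hc
    have : w = -1 := by linear_combination hc
    rw [this] at hwnorm
    simp at hwnorm
    linarith
  -- normSq G = |1+w|⁻¹
  have hnormSqG : Complex.normSq G = (‖1+w‖)⁻¹ := by
    have h1 : ‖G‖ * ‖G‖ = (‖1+w‖)⁻¹ := by
      rw [← norm_mul, hGG, norm_inv]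
    rw [Complex.normSq_eq_norm_sq, sq, h1]
  -- the key algebraic identity x = R² |1+w|²
  have hre1w : (1+w).re = 1 + q * t := by
    simp only [Complex.add_re, Complex.one_re, hw_def, Complex.mul_re, Complex.ofReal_re,
      Complex.ofReal_im, hzre, hzim, hcost]
    ring
  have him1w : (1+w).im = q * Real.sin θ := by
    simp only [Complex.add_im, Complex.one_im, hw_def, Complex.mul_im, Complex.ofReal_re,
      Complex.ofReal_im, hzim]
    ring
  have hnsq : Complex.normSq (1+w) = 1 + 2*q*t + q^2 := by
    rw [Complex.normSq_apply, hre1w, him1w]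
    linear_combination (q^2) * hsint
  have hxid : x = ((sa + sb)/2)^2 * Complex.normSq (1+w) := by
    rw [hnsq, hq_def, ht_def, ← ha2, ← hb2]
    have h1 : sb + sa ≠ 0 := by positivity
    have h2 : sb^2 - sa^2 ≠ 0 := by nlinarith
    field_simp
    ring
  have hRpos : (0:ℝ) < (sa + sb)/2 := by linarith
  have habs1w : 0 < ‖1+w‖ := norm_pos_iff.mpr h1w
  have hsqrtx : Real.sqrt x = ((sa + sb)/2) * ‖1+w‖ := by
    rw [hxid, Real.sqrt_mul (sq_nonneg _), Real.sqrt_sq hRpos.le, Complex.norm_def]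
  have hinv : 1 / Real.sqrt x = (2/(sa+sb)) * Complex.normSq G := by
    rw [hsqrtx, hnormSqG]
    field_simp
  -- summability of h
  have hhs : Summable h := by
    rw [hh_def]
    exact summable_mul_of_summable_norm hgs hg's
  have hhnorm_eq : (fun pr : ℕ × ℕ => ‖h pr‖)
      = fun pr => (c pr.1 * q ^ pr.1) * (c pr.2 * q ^ pr.2) := by
    funext pr
    have e0 : h pr = g pr.1 * g' pr.2 := rfl
    rw [e0, norm_mul, congrFun hgnorm pr.1, congrFun hg'norm pr.2]
  have hhns : Summable fun pr : ℕ × ℕ => ‖h pr‖ := by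
    rw [hhnorm_eq]
    exact (summable_cq hq0.le hq1).mul_of_nonneg (summable_cq hq0.le hq1)
      (fun j => mul_nonneg (c_nonneg j) (pow_nonneg hq0.le j))
      (fun j => mul_nonneg (c_nonneg j) (pow_nonneg hq0.le j))
  have htotalnorm : ∑' pr : ℕ × ℕ, ‖h pr‖ = (1-q)⁻¹ := by
    rw [hhnorm_eq, ← tsum_mul_tsum_of_summable_norm (summable_cq_norm hq0.le hq1)
      (summable_cq_norm hq0.le hq1), tsum_cq_sq hq0.le hq1]
  -- decomposition of Dset into antidiagonals
  have hDb : Dset m = (range (m+1)).biUnion (fun k => Finset.HasAntidiagonal.antidiagonal k) := by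
    ext pr
    simp only [Dset, Finset.mem_filter, Finset.mem_product, Finset.mem_range,
      Finset.mem_biUnion, Finset.HasAntidiagonal.mem_antidiagonal]
    constructor
    · rintro ⟨⟨h1, h2⟩, h3⟩; exact ⟨pr.1 + pr.2, by omega, rfl⟩
    · rintro ⟨k, hk, rfl⟩; omega
  have hdisj : ∀ k1 ∈ range (m+1), ∀ k2 ∈ range (m+1), k1 ≠ k2 →
      Disjoint (Finset.HasAntidiagonal.antidiagonal k1) (Finset.HasAntidiagonal.antidiagonal k2) := by
    intro k1 _ k2 _ hne
    rw [Finset.disjoint_left]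
    intro pr h1 h2
    rw [Finset.HasAntidiagonal.mem_antidiagonal] at h1 h2
    omega
  have hDnorm : ∑ pr ∈ Dset m, ‖h pr‖ = ∑ k ∈ range (m+1), q^k := by
    rw [hDb, Finset.sum_biUnion hdisj]
    refine Finset.sum_congr rfl ?_
    intro k _
    have : ∀ pr ∈ Finset.HasAntidiagonal.antidiagonal k, ‖h pr‖ = (c pr.1 * c pr.2) * q^k := by
      intro pr hpr
      rw [congrFun hhnorm_eq pr, ← Finset.HasAntidiagonal.mem_antidiagonal.mp hpr, pow_add]
      ring
    rw [Finset.sum_congr rfl this, ← Finset.sum_mul, c_antidiagonal_sum, one_mul]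
  have hgeom : ∑ k ∈ range (m+1), q^k = (1 - q^(m+1))/(1-q) := by
    rw [geom_sum_eq (by linarith : q ≠ 1)]
    have : q - 1 ≠ 0 := by linarith
    have h1q : (1:ℝ) - q ≠ 0 := by linarith
    field_simp
    ring
  -- tail bound
  have h1q : (1:ℝ) - q ≠ 0 := by linarith
  have htailnorm : ∑' pr : ↑(↑(Dset m) : Set (ℕ × ℕ))ᶜ, ‖h ↑pr‖ = q^(m+1)/(1-q) := by
    have hsplit := Summable.sum_add_tsum_compl (s := Dset m) hhns
    rw [hDnorm, hgeom, htotalnorm] at hsplit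
    have : ∑' pr : ↑(↑(Dset m) : Set (ℕ × ℕ))ᶜ, ‖h ↑pr‖
        = (1-q)⁻¹ - (1 - q^(m+1))/(1-q) := by linarith
    rw [this]
    field_simp
    try ring
  -- explicit form of each term
  have hconjz : (starRingEnd ℂ) z = Complex.exp (-((θ:ℂ) * Complex.I)) := by
    rw [hz_def, ← Complex.exp_conj]
    congr 1
    simp only [map_mul, Complex.conj_ofReal, Complex.conj_I]
    ring
  have hterm : ∀ pr : ℕ × ℕ, h pr =
      (((-1:ℝ)^(pr.1+pr.2) * (c pr.1 * c pr.2) * q^(pr.1+pr.2) : ℝ) : ℂ) *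
        Complex.exp ((((pr.1:ℝ) - (pr.2:ℝ)) * θ : ℝ) * Complex.I) := by
    intro pr
    have e0 : h pr = (↑(c pr.1) * (-w)^pr.1) * (↑(c pr.2) * (-w')^pr.2) := rfl
    have hnw1 : -w = ((-q : ℝ) : ℂ) * z := by rw [hw_def]; push_cast; ring
    have hnw2 : -w' = ((-q : ℝ) : ℂ) * Complex.exp (-((θ:ℂ) * Complex.I)) := by
      rw [hw'_def, hw_def, map_mul, hconjz, Complex.conj_ofReal]; push_cast; ring
    have hexp : Complex.exp ((pr.1:ℂ) * ((θ:ℂ) * Complex.I)) *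
        Complex.exp ((pr.2:ℂ) * -((θ:ℂ) * Complex.I))
        = Complex.exp ((((pr.1:ℝ) - (pr.2:ℝ)) * θ : ℝ) * Complex.I) := by
      rw [← Complex.exp_add]
      congr 1
      push_cast
      ring
    rw [e0, hnw1, hnw2, mul_pow, mul_pow, hz_def, ← Complex.exp_nat_mul,
      ← Complex.exp_nat_mul]
    rw [show (↑(c pr.1) * (((-q:ℝ):ℂ)^pr.1 * Complex.exp ((pr.1:ℂ) * ((θ:ℂ) * Complex.I)))) *
        (↑(c pr.2) * (((-q:ℝ):ℂ)^pr.2 * Complex.exp ((pr.2:ℂ) * -((θ:ℂ) * Complex.I))))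
        = (↑(c pr.1) * ↑(c pr.2) * ((-q:ℝ):ℂ)^(pr.1+pr.2)) *
          (Complex.exp ((pr.1:ℂ) * ((θ:ℂ) * Complex.I)) *
            Complex.exp ((pr.2:ℂ) * -((θ:ℂ) * Complex.I))) from by rw [pow_add]; ring,
      hexp]
    congr 1
    push_cast
    ring
  have hre_term : ∀ pr : ℕ × ℕ, (h pr).re =
      ((-1:ℝ)^(pr.1+pr.2) * (c pr.1 * c pr.2) * q^(pr.1+pr.2)) *
        Real.cos (((pr.1:ℝ) - (pr.2:ℝ)) * θ) := by
    intro pr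
    rw [hterm pr, Complex.re_ofReal_mul, Complex.exp_ofReal_mul_I_re]
  -- evaluation of the polynomial
  have hba : b - a ≠ 0 := by linarith
  have hlin : (lin a b).eval x = t := by
    simp only [lin, Polynomial.eval_add, Polynomial.eval_mul, Polynomial.eval_C,
      Polynomial.eval_X, ht_def]
    field_simp
    ring
  have hEval : (approxPoly a b q m).eval x = (2/(sa+sb)) * ∑ pr ∈ Dset m, (h pr).re := by
    unfold approxPoly
    rw [Polynomial.eval_mul, Polynomial.eval_C, Polynomial.eval_finset_sum]
    congr 1
    refine Finset.sum_congr rfl ?_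
    intro pr _
    unfold chebTerm
    rw [Polynomial.eval_mul, Polynomial.eval_C, Polynomial.eval_comp, hlin, ← hcost,
      Polynomial.Chebyshev.T_real_cos, hre_term pr]
    have : (((pr.1:ℤ) - (pr.2:ℤ) : ℤ) : ℝ) * θ = ((pr.1:ℝ) - (pr.2:ℝ)) * θ := by
      push_cast; ring
    rw [this]
  -- real part decomposition
  have hreG : Complex.normSq G = (∑ pr ∈ Dset m, (h pr).re) +
      (∑' pr : ↑(↑(Dset m) : Set (ℕ × ℕ))ᶜ, h ↑pr).re := by
    have h1 : ((Complex.normSq G : ℝ) : ℂ)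
        = (∑ pr ∈ Dset m, h pr) + (∑' pr : ↑(↑(Dset m) : Set (ℕ × ℕ))ᶜ, h ↑pr) := by
      rw [hprod, ← Summable.sum_add_tsum_compl (s := Dset m) hhs]
    have h2 := congrArg Complex.re h1
    simpa [Complex.ofReal_re, Complex.add_re, Complex.re_sum] using h2
  have hdiff : 1 / Real.sqrt x - (approxPoly a b q m).eval x
      = (2/(sa+sb)) * (∑' pr : ↑(↑(Dset m) : Set (ℕ × ℕ))ᶜ, h ↑pr).re := by
    rw [hinv, hEval, hreG]
    ring
  rw [hdiff, abs_mul, abs_of_pos (by positivity : (0:ℝ) < 2/(sa+sb))]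
  have h5 : |(∑' pr : ↑(↑(Dset m) : Set (ℕ × ℕ))ᶜ, h ↑pr).re| ≤ q^(m+1)/(1-q) := by
    refine le_trans (Complex.abs_re_le_norm _) ?_
    exact le_trans (norm_tsum_le_tsum_norm (hhns.subtype _)) (le_of_eq htailnorm)
  have h6 : (2/(sa+sb)) * (q^(m+1)/(1-q)) = q^(m+1)/sa := by
    have h1mq : 1 - q = 2*sa/(sb+sa) := by rw [hq_def]; field_simp; ring
    rw [h1mq]
    field_simp
    ring
  calc 2/(sa+sb) * |(∑' pr : ↑(↑(Dset m) : Set (ℕ × ℕ))ᶜ, h ↑pr).re|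
      ≤ 2/(sa+sb) * (q^(m+1)/(1-q)) :=
        mul_le_mul_of_nonneg_left h5 (by positivity)
    _ = q^(m+1)/sa := h6


lemma entry_bound {n : ℕ} (U : Matrix (Fin n) (Fin n) ℂ) (hU : U * U.conjTranspose = 1)
    (g : Fin n → ℂ) (C : ℝ) (hC : 0 ≤ C) (hg : ∀ i, ‖g i‖ ≤ C) (k t : Fin n) :
    ‖(U * Matrix.diagonal g * U.conjTranspose) k t‖ ≤ C := by
  have hrow : ∀ r : Fin n, ∑ i, Complex.normSq (U r i) = 1 := by
    intro r
    have h1 : (U * U.conjTranspose) r r = 1 := by rw [hU]; simp [Matrix.one_apply]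
    rw [Matrix.mul_apply] at h1
    have h2 : ∀ i ∈ Finset.univ, U r i * U.conjTranspose i r
        = ((Complex.normSq (U r i) : ℝ) : ℂ) := by
      intro i _
      rw [Matrix.conjTranspose_apply, ← Complex.mul_conj]
      rfl
    rw [Finset.sum_congr rfl h2, ← Complex.ofReal_sum] at h1
    exact_mod_cast h1
  have he : (U * Matrix.diagonal g * U.conjTranspose) k t
      = ∑ i, U k i * g i * (starRingEnd ℂ) (U t i) := by
    rw [Matrix.mul_apply]
    refine Finset.sum_congr rfl ?_
    intro i _
    rw [Matrix.mul_diagonal, Matrix.conjTranspose_apply]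
    rfl
  rw [he]
  have step1 : ‖∑ i, U k i * g i * (starRingEnd ℂ) (U t i)‖
      ≤ ∑ i, ‖U k i‖ * ‖U t i‖ * C := by
    refine le_trans (norm_sum_le _ _) (Finset.sum_le_sum ?_)
    intro i _
    rw [norm_mul, norm_mul, Complex.norm_conj]
    calc ‖U k i‖ * ‖g i‖ * ‖U t i‖
        ≤ ‖U k i‖ * C * ‖U t i‖ := by
          have h1 : (0:ℝ) ≤ ‖U k i‖ := norm_nonneg _
          have h2 : (0:ℝ) ≤ ‖U t i‖ := norm_nonneg _
          exact mul_le_mul_of_nonneg_right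
            (mul_le_mul_of_nonneg_left (hg i) h1) h2
      _ = ‖U k i‖ * ‖U t i‖ * C := by ring
  refine le_trans step1 ?_
  have hcs := Finset.sum_mul_sq_le_sq_mul_sq Finset.univ (fun i => ‖U k i‖)
    (fun i => ‖U t i‖)
  have hsq1 : ∑ i, ‖U k i‖ ^ 2 = 1 := by
    rw [← hrow k]; refine Finset.sum_congr rfl ?_; intro i _; exact Complex.sq_norm _
  have hsq2 : ∑ i, ‖U t i‖ ^ 2 = 1 := by
    rw [← hrow t]; refine Finset.sum_congr rfl ?_; intro i _; exact Complex.sq_norm _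
  rw [hsq1, hsq2, one_mul] at hcs
  have hnn : (0:ℝ) ≤ ∑ i, ‖U k i‖ * ‖U t i‖ :=
    Finset.sum_nonneg fun i _ => mul_nonneg (norm_nonneg _) (norm_nonneg _)
  have hle1 : ∑ i, ‖U k i‖ * ‖U t i‖ ≤ 1 := by nlinarith
  calc ∑ i, ‖U k i‖ * ‖U t i‖ * C
      = (∑ i, ‖U k i‖ * ‖U t i‖) * C := by rw [Finset.sum_mul]
    _ ≤ 1 * C := mul_le_mul_of_nonneg_right hle1 hC
    _ = C := one_mul C

lemma pow_banded {n : ℕ} (β : ℕ) (M : Matrix (Fin n) (Fin n) ℂ)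
    (hband : ∀ i j : Fin n, (β : ℝ) < |((i : ℕ) : ℝ) - ((j : ℕ) : ℝ)| → M i j = 0) :
    ∀ (jp : ℕ) (k t : Fin n), ((jp * β : ℕ) : ℝ) < |((k : ℕ) : ℝ) - ((t : ℕ) : ℝ)| →
      (M ^ jp) k t = 0 := by
  intro jp
  induction jp with
  | zero =>
      intro k t h
      have hkt : k ≠ t := by
        intro hkt
        subst hkt
        simp at h
      rw [pow_zero]
      exact Matrix.one_apply_ne hkt
  | succ jp ih =>
      intro k t h
      rw [pow_succ, Matrix.mul_apply]
      apply Finset.sum_eq_zero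
      intro l _
      by_cases h1 : ((jp * β : ℕ) : ℝ) < |((k : ℕ) : ℝ) - ((l : ℕ) : ℝ)|
      · rw [ih k l h1, zero_mul]
      · have htri := abs_sub_le ((k : ℕ) : ℝ) ((l : ℕ) : ℝ) ((t : ℕ) : ℝ)
        push_neg at h1
        have h2 : (β : ℝ) < |((l : ℕ) : ℝ) - ((t : ℕ) : ℝ)| := by
          push_cast at h h1 ⊢
          linarith
        rw [hband l t h2, mul_zero]


lemma scalar_exists (a b : ℝ) (ha : 0 < a) (hab : a ≤ b) (m : ℕ) :
    ∃ p : Polynomial ℝ, p.natDegree ≤ m ∧ ∀ x : ℝ, a ≤ x → x ≤ b →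
      |1 / Real.sqrt x - p.eval x|
        ≤ ((Real.sqrt b - Real.sqrt a)/(Real.sqrt b + Real.sqrt a)) ^ (m+1) / Real.sqrt a := by
  rcases eq_or_lt_of_le hab with heq | hlt
  · subst heq
    refine ⟨Polynomial.C (1 / Real.sqrt a), le_trans (Polynomial.natDegree_C _).le (Nat.zero_le m), ?_⟩
    intro x hx1 hx2
    have hxa : x = a := le_antisymm hx2 hx1
    subst hxa
    rw [Polynomial.eval_C, sub_self, abs_zero, sub_self, zero_div,
      zero_pow (Nat.succ_ne_zero m), zero_div]
  · exact ⟨approxPoly a b _ m, approxPoly_natDegree_le _ _ _ _,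
      fun x hx1 hx2 => scalar_approx a b ha hlt m x hx1 hx2⟩

end InvSqrtAux

open InvSqrtAux in
set_option maxHeartbeats 1000000 in
/-- Explicit exponential decay bound for the entries of the inverse square root of a banded
Hermitian positive definite matrix `M`, in terms of `κ₀ = λ_max/λ_min`:
`|(M^{-1/2})_{kt}| ≤ (2/π)(C(0) + C₂) q^{|k-t|/β}` with
`q = (√λ_max - √λ_min)/(√λ_max + √λ_min)`. Here `M^{-1/2}` is the inverse of the unique
Hermitian positive definite square root of `M`, realized as `hM.posSemidef.sqrt⁻¹`. -/
theorem inv_sqrt_banded_entry_bound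
    (n β : ℕ) (hβ : 0 < β) (M : Matrix (Fin n) (Fin n) ℂ) (hM : M.PosDef)
    (hband : ∀ i j : Fin n, (β : ℝ) < |((i : ℕ) : ℝ) - ((j : ℕ) : ℝ)| → M i j = 0)
    (lmin lmax : ℝ)
    (hlmin : IsLeast (Set.range hM.1.eigenvalues) lmin)
    (hlmax : IsGreatest (Set.range hM.1.eigenvalues) lmax)
    (k t : Fin n) :
    ‖((hM.posSemidef.sqrt)⁻¹) k t‖ ≤
      (2 / Real.pi) *
        (max (1 / lmin) ((1 + Real.sqrt (lmax / lmin)) ^ 2 / (2 * lmax)) +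
          max 1 (Real.sqrt (1 + (1 / 2) * Real.sqrt (lmax / lmin)))) *
        ((Real.sqrt lmax - Real.sqrt lmin) / (Real.sqrt lmax + Real.sqrt lmin)) ^
          (|((k : ℕ) : ℝ) - ((t : ℕ) : ℝ)| / β) := by
  classical
  set ev : Fin n → ℝ := hM.1.eigenvalues with hev
  set U : Matrix (Fin n) (Fin n) ℂ := (hM.1.eigenvectorUnitary : Matrix (Fin n) (Fin n) ℂ) with hUdef
  -- unitarity
  have hUU : U * U.conjTranspose = 1 := by
    have h := (Matrix.mem_unitaryGroup_iff).mp hM.1.eigenvectorUnitary.2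
    simpa [Matrix.star_eq_conjTranspose] using h
  have hU'U : U.conjTranspose * U = 1 := by
    have h := (Matrix.mem_unitaryGroup_iff').mp hM.1.eigenvectorUnitary.2
    simpa [Matrix.star_eq_conjTranspose] using h
  have hkey : ∀ X : Matrix (Fin n) (Fin n) ℂ, U.conjTranspose * (U * X) = X := by
    intro X; rw [← Matrix.mul_assoc, hU'U, Matrix.one_mul]
  have Phi_mul : ∀ g1 g2 : Fin n → ℂ,
      (U * Matrix.diagonal g1 * U.conjTranspose) * (U * Matrix.diagonal g2 * U.conjTranspose)
      = U * Matrix.diagonal (g1 * g2) * U.conjTranspose := by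
    intro g1 g2
    simp only [Matrix.mul_assoc]
    rw [hkey (Matrix.diagonal g2 * U.conjTranspose),
      ← Matrix.mul_assoc (Matrix.diagonal g1) (Matrix.diagonal g2) U.conjTranspose,
      Matrix.diagonal_mul_diagonal]
    rfl
  -- spectral theorem
  have hspec : M = U * Matrix.diagonal (fun i => ((ev i : ℝ) : ℂ)) * U.conjTranspose := by
    simpa [Matrix.star_eq_conjTranspose, Function.comp_def] using hM.1.spectral_theorem
  have Phi_pow : ∀ j : ℕ,
      U * Matrix.diagonal (fun i => ((ev i : ℝ) : ℂ) ^ j) * U.conjTranspose = M ^ j := by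
    intro j
    induction j with
    | zero =>
        simp only [pow_zero]
        have hd1 : Matrix.diagonal (fun _ : Fin n => (1:ℂ)) = 1 := Matrix.diagonal_one
        rw [hd1, Matrix.mul_one, hUU]
    | succ j ih =>
        have hfun : ((fun i => ((ev i : ℝ) : ℂ) ^ j) * (fun i => ((ev i : ℝ) : ℂ)))
            = fun i => ((ev i : ℝ) : ℂ) ^ (j+1) := by
          funext i; simp [Pi.mul_apply, pow_succ]
        have step : U * Matrix.diagonal (fun i => ((ev i : ℝ) : ℂ) ^ (j+1)) * U.conjTranspose
            = (U * Matrix.diagonal (fun i => ((ev i : ℝ) : ℂ) ^ j) * U.conjTranspose) *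
              (U * Matrix.diagonal (fun i => ((ev i : ℝ) : ℂ)) * U.conjTranspose) := by
          rw [Phi_mul, hfun]
        rw [step, ih, ← hspec, pow_succ]
  -- eigenvalue facts
  have hlmin_pos : 0 < lmin := by
    obtain ⟨i0, hi0⟩ := hlmin.1
    rw [← hi0]
    exact hM.eigenvalues_pos i0
  have hminmax : lmin ≤ lmax := hlmin.2 hlmax.1
  have hev_lb : ∀ i, lmin ≤ ev i := fun i => hlmin.2 ⟨i, rfl⟩
  have hev_ub : ∀ i, ev i ≤ lmax := fun i => hlmax.2 ⟨i, rfl⟩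
  have hev_pos : ∀ i, 0 < ev i := fun i => lt_of_lt_of_le hlmin_pos (hev_lb i)
  have hslmin : 0 < Real.sqrt lmin := Real.sqrt_pos.mpr hlmin_pos
  -- inverse square root formula
  have hsqrt_formula : hM.posSemidef.sqrt
      = U * Matrix.diagonal (fun i => ((Real.sqrt (ev i) : ℝ) : ℂ)) * U.conjTranspose := rfl
  have hinv_formula : (hM.posSemidef.sqrt)⁻¹
      = U * Matrix.diagonal (fun i => ((1 / Real.sqrt (ev i) : ℝ) : ℂ)) * U.conjTranspose := by
    apply Matrix.inv_eq_right_inv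
    rw [hsqrt_formula, Phi_mul]
    have : ((fun i => ((Real.sqrt (ev i) : ℝ) : ℂ)) * (fun i => ((1 / Real.sqrt (ev i) : ℝ) : ℂ)))
        = fun _ : Fin n => (1:ℂ) := by
      funext i
      have hne : Real.sqrt (ev i) ≠ 0 := ne_of_gt (Real.sqrt_pos.mpr (hev_pos i))
      simp only [Pi.mul_apply]
      rw [← Complex.ofReal_mul]
      rw [mul_one_div_cancel hne]
      exact Complex.ofReal_one
    rw [this, Matrix.diagonal_one, Matrix.mul_one, hUU]
  -- vanishing of polynomial entries
  have hpoly_entry : ∀ (m : ℕ) (p : Polynomial ℝ), p.natDegree ≤ m →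
      ((m * β : ℕ) : ℝ) < |((k : ℕ) : ℝ) - ((t : ℕ) : ℝ)| →
      (U * Matrix.diagonal (fun i => ((p.eval (ev i) : ℝ) : ℂ)) * U.conjTranspose) k t = 0 := by
    intro m p hdeg hdist
    have hfun : (fun i => ((p.eval (ev i) : ℝ) : ℂ))
        = fun i => ∑ j ∈ range (m+1), (p.coeff j : ℂ) * ((ev i : ℝ) : ℂ) ^ j := by
      funext i
      rw [Polynomial.eval_eq_sum_range' (Nat.lt_succ_of_le hdeg)]
      push_cast
      ring
    rw [hfun]
    have hdiag : Matrix.diagonal (fun i => ∑ j ∈ range (m+1), (p.coeff j : ℂ) * ((ev i:ℝ):ℂ)^j)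
        = ∑ j ∈ range (m+1), Matrix.diagonal (fun i => (p.coeff j : ℂ) * ((ev i:ℝ):ℂ)^j) := by
      ext r s
      by_cases hrs : r = s
      · subst hrs; simp [Matrix.diagonal_apply_eq, Matrix.sum_apply]
      · simp [Matrix.diagonal_apply_ne _ hrs, Matrix.sum_apply]
    rw [hdiag, Matrix.mul_sum, Matrix.sum_mul, Matrix.sum_apply]
    apply Finset.sum_eq_zero
    intro j hj
    have hsm : Matrix.diagonal (fun i => (p.coeff j : ℂ) * ((ev i:ℝ):ℂ)^j)
        = (p.coeff j : ℂ) • Matrix.diagonal (fun i => ((ev i:ℝ):ℂ)^j) := by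
      rw [← Matrix.diagonal_smul]
      congr 1
    have hj' : j ≤ m := Nat.lt_succ_iff.mp (Finset.mem_range.mp hj)
    have hjd : ((j * β : ℕ) : ℝ) < |((k : ℕ) : ℝ) - ((t : ℕ) : ℝ)| := by
      refine lt_of_le_of_lt ?_ hdist
      exact_mod_cast Nat.mul_le_mul_right β hj'
    rw [hsm, Matrix.mul_smul, Matrix.smul_mul, Phi_pow j, Matrix.smul_apply,
      pow_banded β M hband j k t hjd, smul_zero]
  -- the q quantity
  set q : ℝ := (Real.sqrt lmax - Real.sqrt lmin) / (Real.sqrt lmax + Real.sqrt lmin) with hq_def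
  have hq0 : 0 ≤ q := by
    apply div_nonneg
    · have := Real.sqrt_le_sqrt hminmax
      linarith
    · positivity
  have hq1 : q < 1 := by
    rw [hq_def, div_lt_one (by positivity)]
    linarith [hslmin]
  -- the key estimate
  have key_est : ∀ m : ℕ, ((m * β : ℕ) : ℝ) < |((k : ℕ) : ℝ) - ((t : ℕ) : ℝ)| →
      ‖((hM.posSemidef.sqrt)⁻¹) k t‖ ≤ q ^ (m+1) / Real.sqrt lmin := by
    intro m hdist
    obtain ⟨p, hdeg, hp⟩ := scalar_exists lmin lmax hlmin_pos hminmax m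
    rw [hinv_formula]
    have hsplitM : U * Matrix.diagonal (fun i => ((1/Real.sqrt (ev i) : ℝ):ℂ)) * U.conjTranspose
        = U * Matrix.diagonal
            (fun i => ((1/Real.sqrt (ev i) - p.eval (ev i) : ℝ):ℂ)) * U.conjTranspose
          + U * Matrix.diagonal (fun i => ((p.eval (ev i) : ℝ):ℂ)) * U.conjTranspose := by
      have hfun : (fun i => ((1/Real.sqrt (ev i) : ℝ):ℂ))
          = fun i => (((1/Real.sqrt (ev i) - p.eval (ev i) : ℝ):ℂ)
            + ((p.eval (ev i) : ℝ):ℂ)) := by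
        funext i
        push_cast
        ring
      rw [hfun, ← Matrix.diagonal_add, Matrix.mul_add, Matrix.add_mul]
    rw [hsplitM, Matrix.add_apply, hpoly_entry m p hdeg hdist, add_zero]
    refine entry_bound U hUU _ _ (by positivity) ?_ k t
    intro i
    rw [Complex.norm_real, Real.norm_eq_abs]
    exact hp (ev i) (hev_lb i) (hev_ub i)
  -- constant estimate
  have hconst : 1 / Real.sqrt lmin ≤ (2 / Real.pi) *
      (max (1 / lmin) ((1 + Real.sqrt (lmax / lmin)) ^ 2 / (2 * lmax)) +
        max 1 (Real.sqrt (1 + (1 / 2) * Real.sqrt (lmax / lmin)))) := by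
    have hpi : 0 < Real.pi := Real.pi_pos
    have hpi4 : Real.pi ≤ 4 := Real.pi_le_four
    have hs2 : Real.sqrt lmin ^ 2 = lmin := Real.sq_sqrt hlmin_pos.le
    have target : Real.pi * Real.sqrt lmin ≤ 2 * (1 + lmin) := by
      nlinarith [sq_nonneg (Real.sqrt lmin - 1), hslmin]
    have step1 : 1 / Real.sqrt lmin ≤ (2 / Real.pi) * (1 / lmin + 1) := by
      have e1 : (2 / Real.pi) * (1 / lmin + 1) = 2 * (1 + lmin) / (Real.pi * lmin) := by
        field_simp
        try ring
      rw [e1, div_le_div_iff₀ hslmin (by positivity)]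
      nlinarith [target, hslmin, hs2]
    refine le_trans step1 ?_
    have hmul : (0:ℝ) ≤ 2 / Real.pi := by positivity
    refine mul_le_mul_of_nonneg_left (add_le_add (le_max_left _ _) (le_max_left _ _)) hmul
  -- case split on k = t
  by_cases hkt : (k : ℕ) = (t : ℕ)
  · have hzero : |((k : ℕ) : ℝ) - ((t : ℕ) : ℝ)| = 0 := by
      rw [hkt]; simp
    rw [hzero, zero_div, Real.rpow_zero, mul_one]
    refine le_trans ?_ hconst
    rw [hinv_formula]
    refine entry_bound U hUU _ _ (by positivity) ?_ k t
    intro i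
    rw [Complex.norm_real, Real.norm_eq_abs]
    have h1 : 0 < Real.sqrt (ev i) := Real.sqrt_pos.mpr (hev_pos i)
    have h2 : Real.sqrt lmin ≤ Real.sqrt (ev i) := Real.sqrt_le_sqrt (hev_lb i)
    rw [abs_of_pos (by positivity)]
    exact one_div_le_one_div_of_le hslmin h2
  · -- distance ≥ 1
    set dn : ℕ := Nat.dist (k : ℕ) (t : ℕ) with hdn_def
    have hdn_pos : 0 < dn := Nat.dist_pos_of_ne hkt
    have hdist_eq : |((k : ℕ) : ℝ) - ((t : ℕ) : ℝ)| = (dn : ℝ) := by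
      rcases le_total ((k : ℕ)) ((t : ℕ)) with hle | hle
      · rw [hdn_def, Nat.dist_eq_sub_of_le hle, Nat.cast_sub hle,
          abs_sub_comm, abs_of_nonneg (by exact sub_nonneg.mpr (by exact_mod_cast hle))]
      · rw [hdn_def, Nat.dist_eq_sub_of_le_right hle, Nat.cast_sub hle,
          abs_of_nonneg (by exact sub_nonneg.mpr (by exact_mod_cast hle))]
    set m : ℕ := (dn - 1) / β with hm_def
    have hm1 : m * β < dn :=
      lt_of_le_of_lt (Nat.div_mul_le_self (dn - 1) β) (Nat.sub_lt hdn_pos one_pos)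
    have hm2 : dn ≤ (m + 1) * β := by
      have h1 := Nat.div_add_mod (dn - 1) β
      have h2 : (dn - 1) % β + 1 ≤ β := Nat.succ_le_of_lt (Nat.mod_lt _ hβ)
      have h3 : dn = β * m + (dn - 1) % β + 1 := by
        rw [hm_def, h1]
        exact (Nat.succ_pred_eq_of_pos hdn_pos).symm
      calc dn = β * m + ((dn - 1) % β + 1) := by
            conv_lhs => rw [h3]
            exact Nat.add_assoc _ _ _
        _ ≤ β * m + β := Nat.add_le_add_left h2 _
        _ = (m + 1) * β := by ring
    have hdist : ((m * β : ℕ) : ℝ) < |((k : ℕ) : ℝ) - ((t : ℕ) : ℝ)| := by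
      rw [hdist_eq]
      exact_mod_cast hm1
    have hbound := key_est m hdist
    -- compare powers
    have hexp : (dn : ℝ) / (β : ℝ) ≤ ((m + 1 : ℕ) : ℝ) := by
      rw [div_le_iff₀ (by exact_mod_cast hβ : (0:ℝ) < (β:ℝ))]
      exact_mod_cast hm2
    have hqpow : q ^ (m + 1) ≤ q ^ ((dn : ℝ) / (β : ℝ)) := by
      rcases eq_or_lt_of_le hq0 with hq | hq
      · rw [← hq]
        rw [zero_pow (Nat.succ_ne_zero m), Real.zero_rpow]
        positivity
      · calc q ^ (m+1) = q ^ (((m+1 : ℕ) : ℝ)) := by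
              rw [Real.rpow_natCast]
          _ ≤ q ^ ((dn : ℝ) / (β : ℝ)) :=
              Real.rpow_le_rpow_of_exponent_ge hq hq1.le hexp
    have hrpow_nonneg : 0 ≤ q ^ ((dn : ℝ) / (β : ℝ)) := Real.rpow_nonneg hq0 _
    rw [hdist_eq]
    calc ‖((hM.posSemidef.sqrt)⁻¹) k t‖ ≤ q ^ (m+1) / Real.sqrt lmin := hbound
      _ = (1 / Real.sqrt lmin) * q ^ (m+1) := by ring
      _ ≤ (1 / Real.sqrt lmin) * q ^ ((dn : ℝ) / (β : ℝ)) :=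
          mul_le_mul_of_nonneg_left hqpow (by positivity)
      _ ≤ ((2 / Real.pi) *
          (max (1 / lmin) ((1 + Real.sqrt (lmax / lmin)) ^ 2 / (2 * lmax)) +
            max 1 (Real.sqrt (1 + (1 / 2) * Real.sqrt (lmax / lmin)))))
            * q ^ ((dn : ℝ) / (β : ℝ)) :=
          mul_le_mul_of_nonneg_right hconst hrpow_nonneg
end

section
/- Let M be an n×n Hermitian positive definite complex matrix, let 𝒜 = M ⊗ I + I ⊗ M, and let 𝒜^{−1/2} denote the inverse of the unique Hermitian positive definite square root of 𝒜. Then for all index pairs k = (k₁,k₂) and t = (t₁,t₂), |(𝒜^{−1/2})_{kt}| ≤ (1/√π) · ( ∫₀^∞ |(exp(−τM))_{k₁t₁}|² · τ^{−1/2} dτ )^{1/2} · ( ∫₀^∞ |(exp(−τM))_{k₂t₂}|² · τ^{−1/2} dτ )^{1/2}. -/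
open MeasureTheory Matrix
open scoped Kronecker ComplexOrder

namespace InvSqrtAux

lemma conj_diag_entry {m : Type*} [Fintype m] [DecidableEq m]
    (W : Matrix m m ℂ) (v : m → ℂ) (k t : m) :
    (W * Matrix.diagonal v * Wᴴ) k t = ∑ p, W k p * v p * (starRingEnd ℂ) (W t p) := by
  rw [Matrix.mul_apply]
  simp [Matrix.mul_diagonal, Matrix.conjTranspose_apply]

lemma integrableOn_aux {c : ℝ} (hc : 0 < c) :
    IntegrableOn (fun τ : ℝ => τ ^ (-(1/2) : ℝ) * Real.exp (-(c * τ))) (Set.Ioi 0) := by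
  have h := integrableOn_rpow_mul_exp_neg_mul_rpow (s := -(1/2)) (p := 1) (b := c)
    (by norm_num) one_pos hc
  simpa [Real.rpow_one] using h

lemma integral_aux {c : ℝ} (hc : 0 < c) :
    ∫ τ in Set.Ioi (0:ℝ), τ ^ (-(1/2) : ℝ) * Real.exp (-(c * τ)) =
      Real.sqrt Real.pi / Real.sqrt c := by
  have h := Real.integral_rpow_mul_exp_neg_mul_Ioi (a := 1/2) (r := c) (by norm_num) hc
  rw [show (1/2 : ℝ) - 1 = -(1/2) by norm_num] at h
  rw [h, Real.Gamma_one_half_eq, one_div, ← Real.sqrt_eq_rpow, Real.sqrt_inv]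
  ring

end InvSqrtAux

/-- Entrywise bound for the inverse square root of the Kronecker sum `𝒜 = M ⊗ I + I ⊗ M`
of a Hermitian positive definite matrix `M` with itself: if `S` is the (unique) Hermitian
positive definite square root of `𝒜`, then
`|(𝒜^{-1/2})_{kt}| ≤ (1/√π) (∫₀^∞ |(exp(-τM))_{k₁t₁}|² τ^{-1/2} dτ)^{1/2}
(∫₀^∞ |(exp(-τM))_{k₂t₂}|² τ^{-1/2} dτ)^{1/2}`. -/
theorem inv_sqrt_kronecker_entry_bound
    (n : ℕ) (M : Matrix (Fin n) (Fin n) ℂ) (hM : M.PosDef)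
    (S : Matrix (Fin n × Fin n) (Fin n × Fin n) ℂ) (hS : S.PosDef)
    (hSsq : S * S = M ⊗ₖ (1 : Matrix (Fin n) (Fin n) ℂ) +
        (1 : Matrix (Fin n) (Fin n) ℂ) ⊗ₖ M)
    (k t : Fin n × Fin n) :
    ‖(S⁻¹) k t‖ ≤
      (1 / Real.sqrt Real.pi) *
        Real.sqrt (∫ τ in Set.Ioi (0 : ℝ),
          ‖(NormedSpace.exp (-(τ • M))) k.1 t.1‖ ^ 2 * τ ^ (-(1 / 2) : ℝ)) *
        Real.sqrt (∫ τ in Set.Ioi (0 : ℝ),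
          ‖(NormedSpace.exp (-(τ • M))) k.2 t.2‖ ^ 2 * τ ^ (-(1 / 2) : ℝ)) := by
  classical
  have hHerm := hM.1
  set d : Fin n → ℝ := hHerm.eigenvalues with hd
  have hdpos : ∀ i, 0 < d i := hM.eigenvalues_pos
  set U : Matrix (Fin n) (Fin n) ℂ := (hHerm.eigenvectorUnitary : Matrix (Fin n) (Fin n) ℂ)
    with hUdef
  have hU1 : U * Uᴴ = 1 := by
    rw [← Matrix.star_eq_conjTranspose]
    exact Matrix.mem_unitaryGroup_iff.mp (hHerm.eigenvectorUnitary).2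
  have hU2 : Uᴴ * U = 1 := by
    rw [← Matrix.star_eq_conjTranspose]
    exact Matrix.mem_unitaryGroup_iff'.mp (hHerm.eigenvectorUnitary).2
  have hMspec : M = U * Matrix.diagonal (fun i => (d i : ℂ)) * Uᴴ := by
    have := hHerm.spectral_theorem
    rw [← Matrix.star_eq_conjTranspose] at *
    convert this using 2
    rfl
  -- Kronecker unitary
  set W : Matrix (Fin n × Fin n) (Fin n × Fin n) ℂ := U ⊗ₖ U with hWdef
  have hWconj : Wᴴ = Uᴴ ⊗ₖ Uᴴ := by
    ext a b
    simp [hWdef, Matrix.conjTranspose_apply, star_mul', mul_comm]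
  have hW1 : W * Wᴴ = 1 := by
    rw [hWconj, hWdef, ← Matrix.mul_kronecker_mul, hU1, Matrix.one_kronecker_one]
  have hW2 : Wᴴ * W = 1 := by
    rw [hWconj, hWdef, ← Matrix.mul_kronecker_mul, hU2, Matrix.one_kronecker_one]
  set lam : Fin n × Fin n → ℝ := fun p => d p.1 + d p.2 with hlam
  have hlampos : ∀ p, 0 < lam p := fun p => add_pos (hdpos _) (hdpos _)
  have hsand : ∀ A B : Matrix (Fin n × Fin n) (Fin n × Fin n) ℂ,
      (W * A * Wᴴ) * (W * B * Wᴴ) = W * (A * B) * Wᴴ := by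
    intro A B
    have h1 : (W * A * Wᴴ) * (W * B * Wᴴ) = W * (A * ((Wᴴ * W) * (B * Wᴴ))) := by
      simp only [Matrix.mul_assoc]
    rw [h1, hW2, Matrix.one_mul]
    simp only [Matrix.mul_assoc]
  set T : Matrix (Fin n × Fin n) (Fin n × Fin n) ℂ :=
    W * Matrix.diagonal (fun p => (Real.sqrt (lam p) : ℂ)) * Wᴴ with hT
  have hTpsd : T.PosSemidef := by
    refine Matrix.PosSemidef.mul_mul_conjTranspose_same ?_ W
    refine Matrix.posSemidef_diagonal_iff.mpr fun p => ?_
    exact_mod_cast Real.sqrt_nonneg (lam p)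
  have hdiagsum : Matrix.diagonal (fun p : Fin n × Fin n => (lam p : ℂ)) =
      (Matrix.diagonal fun i => (d i : ℂ)) ⊗ₖ (1 : Matrix (Fin n) (Fin n) ℂ) +
      (1 : Matrix (Fin n) (Fin n) ℂ) ⊗ₖ (Matrix.diagonal fun i => (d i : ℂ)) := by
    rw [← Matrix.diagonal_one, Matrix.diagonal_kronecker_diagonal,
      Matrix.diagonal_kronecker_diagonal, Matrix.diagonal_add]
    exact congrArg Matrix.diagonal (funext fun p => by
      simp only [hlam, Pi.add_apply]
      push_cast
      ring)
  have hAexp : M ⊗ₖ (1 : Matrix (Fin n) (Fin n) ℂ) + (1 : Matrix (Fin n) (Fin n) ℂ) ⊗ₖ M =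
      W * Matrix.diagonal (fun p => (lam p : ℂ)) * Wᴴ := by
    rw [hdiagsum, Matrix.mul_add, Matrix.add_mul, hWconj, hWdef,
      ← Matrix.mul_kronecker_mul, ← Matrix.mul_kronecker_mul,
      ← Matrix.mul_kronecker_mul, ← Matrix.mul_kronecker_mul,
      Matrix.mul_one, hU1, ← hMspec]
  have hTsq : T ^ 2 = M ⊗ₖ (1 : Matrix (Fin n) (Fin n) ℂ) +
      (1 : Matrix (Fin n) (Fin n) ℂ) ⊗ₖ M := by
    rw [sq, hT, hsand, Matrix.diagonal_mul_diagonal, hAexp]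
    have hfun : (fun p : Fin n × Fin n => ((Real.sqrt (lam p) : ℂ)) * ((Real.sqrt (lam p) : ℂ)))
        = fun p => ((lam p : ℝ) : ℂ) := by
      funext p
      rw [← Complex.ofReal_mul, Real.mul_self_sqrt (hlampos p).le]
    rw [hfun]
  have hST : S = T :=
    open scoped MatrixOrder in
      (CFC.sq_eq_sq_iff S T hS.posSemidef.nonneg hTpsd.nonneg).mp (by rw [sq, hSsq, hTsq])
  have hSinv : S⁻¹ = W * Matrix.diagonal (fun p => ((Real.sqrt (lam p) : ℂ))⁻¹) * Wᴴ := by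
    apply Matrix.inv_eq_right_inv
    rw [hST, hT, hsand, Matrix.diagonal_mul_diagonal]
    have hone : (fun p : Fin n × Fin n =>
        (Real.sqrt (lam p) : ℂ) * ((Real.sqrt (lam p) : ℂ))⁻¹) = fun _ => 1 := by
      funext p
      rw [mul_inv_cancel₀]
      exact_mod_cast Real.sqrt_ne_zero'.mpr (hlampos p)
    rw [hone, Matrix.diagonal_one, Matrix.mul_one, hW1]
  have hSentry : (S⁻¹) k t =
      ∑ p, W k p * ((Real.sqrt (lam p) : ℂ))⁻¹ * (starRingEnd ℂ) (W t p) := by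
    rw [hSinv, InvSqrtAux.conj_diag_entry]
  -- exponential entries
  have hUunit : IsUnit U := ⟨⟨U, Uᴴ, hU1, hU2⟩, rfl⟩
  have hUinv : U⁻¹ = Uᴴ := Matrix.inv_eq_left_inv hU2
  have hexp : ∀ τ : ℝ, NormedSpace.exp (-(τ • M)) =
      U * Matrix.diagonal (fun i => Complex.exp ((-(τ * d i) : ℝ) : ℂ)) * Uᴴ := by
    intro τ
    have hD : (Matrix.diagonal fun i : Fin n => ((-(τ * d i) : ℝ) : ℂ)) =
        -(τ • Matrix.diagonal (fun i : Fin n => ((d i : ℝ) : ℂ))) := by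
      ext i j
      rcases eq_or_ne i j with h | h
      · subst h
        simp only [Matrix.diagonal_apply_eq, Matrix.neg_apply, Matrix.smul_apply,
          Complex.real_smul]
        push_cast
        ring
      · simp [Matrix.diagonal_apply_ne _ h]
    have hcomm : U * (τ • Matrix.diagonal (fun i : Fin n => ((d i : ℝ) : ℂ))) * Uᴴ =
        τ • ((U * Matrix.diagonal (fun i : Fin n => ((d i : ℝ) : ℂ))) * Uᴴ) := by
      rw [mul_smul_comm, smul_mul_assoc]
    have harg : -(τ • M) = U * Matrix.diagonal (fun i => ((-(τ * d i) : ℝ) : ℂ)) * U⁻¹ := by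
      rw [hUinv, hMspec, hD, mul_neg, neg_mul, hcomm]
    rw [harg, Matrix.exp_conj U _ hUunit, Matrix.exp_diagonal, hUinv]
    congr 2
    rw [Pi.exp_def]
    funext i
    rw [← Complex.exp_eq_exp_ℂ]
  have hEntry : ∀ a b : Fin n, ∀ τ : ℝ, (NormedSpace.exp (-(τ • M))) a b =
      ∑ i, U a i * Complex.exp ((-(τ * d i) : ℝ) : ℂ) * (starRingEnd ℂ) (U b i) := by
    intro a b τ
    rw [hexp τ, InvSqrtAux.conj_diag_entry]
  -- product of exponential entries
  have hprod : ∀ τ : ℝ,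
      (NormedSpace.exp (-(τ • M))) k.1 t.1 * (NormedSpace.exp (-(τ • M))) k.2 t.2 =
      ∑ p : Fin n × Fin n, (W k p * (starRingEnd ℂ) (W t p)) *
        Complex.exp ((-(τ * lam p) : ℝ) : ℂ) := by
    intro τ
    rw [hEntry k.1 t.1 τ, hEntry k.2 t.2 τ, Finset.sum_mul_sum, Fintype.sum_prod_type]
    refine Finset.sum_congr rfl fun i _ => Finset.sum_congr rfl fun j _ => ?_
    have hsplit : ((-(τ * lam (i, j)) : ℝ) : ℂ) =
        ((-(τ * d i) : ℝ) : ℂ) + ((-(τ * d j) : ℝ) : ℂ) := by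
      push_cast [hlam]
      ring
    have hWk : W k (i, j) = U k.1 i * U k.2 j := rfl
    have hWt : W t (i, j) = U t.1 i * U t.2 j := rfl
    rw [hsplit, Complex.exp_add, hWk, hWt, _root_.map_mul]
    ring
  have hpoint : ∀ τ : ℝ, ((τ ^ (-(1/2) : ℝ) : ℝ) : ℂ) *
      ((NormedSpace.exp (-(τ • M))) k.1 t.1 * (NormedSpace.exp (-(τ • M))) k.2 t.2) =
      ∑ p : Fin n × Fin n, (W k p * (starRingEnd ℂ) (W t p)) *
        ((τ ^ (-(1/2) : ℝ) * Real.exp (-(lam p * τ)) : ℝ) : ℂ) := by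
    intro τ
    rw [hprod τ, Finset.mul_sum]
    refine Finset.sum_congr rfl fun p _ => ?_
    rw [Complex.ofReal_mul, ← Complex.ofReal_exp, mul_comm (lam p) τ]
    ring
  have hintegrand : ∀ p : Fin n × Fin n,
      Integrable (fun τ : ℝ => (W k p * (starRingEnd ℂ) (W t p)) *
        ((τ ^ (-(1/2) : ℝ) * Real.exp (-(lam p * τ)) : ℝ) : ℂ))
        (volume.restrict (Set.Ioi 0)) :=
    fun p => ((InvSqrtAux.integrableOn_aux (hlampos p)).ofReal.const_mul _)
  have hkeyint : (∫ τ in Set.Ioi (0:ℝ), ((τ ^ (-(1/2) : ℝ) : ℝ) : ℂ) *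
      ((NormedSpace.exp (-(τ • M))) k.1 t.1 * (NormedSpace.exp (-(τ • M))) k.2 t.2))
      = (Real.sqrt Real.pi : ℂ) *
        ∑ p, W k p * ((Real.sqrt (lam p) : ℂ))⁻¹ * (starRingEnd ℂ) (W t p) := by
    simp only [hpoint]
    rw [integral_finset_sum _ (fun p _ => hintegrand p)]
    have hterm : ∀ p : Fin n × Fin n, (∫ τ in Set.Ioi (0:ℝ),
        (W k p * (starRingEnd ℂ) (W t p)) *
          ((τ ^ (-(1/2) : ℝ) * Real.exp (-(lam p * τ)) : ℝ) : ℂ))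
        = (W k p * (starRingEnd ℂ) (W t p)) *
          ((Real.sqrt Real.pi / Real.sqrt (lam p) : ℝ) : ℂ) := by
      intro p
      rw [integral_const_mul]
      congr 1
      have hio : (∫ τ in Set.Ioi (0:ℝ),
          ((τ ^ (-(1/2) : ℝ) * Real.exp (-(lam p * τ)) : ℝ) : ℂ))
          = ((∫ τ in Set.Ioi (0:ℝ), τ ^ (-(1/2) : ℝ) * Real.exp (-(lam p * τ)) : ℝ) : ℂ) := by
        exact integral_ofReal
      rw [hio, InvSqrtAux.integral_aux (hlampos p)]
    simp only [hterm]
    rw [Finset.mul_sum]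
    refine Finset.sum_congr rfl fun p _ => ?_
    have h0 : (Real.sqrt (lam p) : ℂ) ≠ 0 := by
      exact_mod_cast Real.sqrt_ne_zero'.mpr (hlampos p)
    rw [Complex.ofReal_div]
    field_simp
  have hπC : ((Real.sqrt Real.pi : ℝ) : ℂ) ≠ 0 := by
    exact_mod_cast (Real.sqrt_ne_zero'.mpr Real.pi_pos)
  have hkey : (S⁻¹) k t = ((Real.sqrt Real.pi : ℝ) : ℂ)⁻¹ *
      ∫ τ in Set.Ioi (0:ℝ), ((τ ^ (-(1/2) : ℝ) : ℝ) : ℂ) *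
        ((NormedSpace.exp (-(τ • M))) k.1 t.1 * (NormedSpace.exp (-(τ • M))) k.2 t.2) := by
    rw [hkeyint, hSentry, ← mul_assoc, inv_mul_cancel₀ hπC, one_mul]
  -- analytic estimates
  have hne : (Finset.univ : Finset (Fin n)).Nonempty := ⟨k.1, Finset.mem_univ _⟩
  set δ : ℝ := Finset.univ.inf' hne d with hδdef
  have hδpos : 0 < δ := (Finset.lt_inf'_iff hne).mpr fun i _ => hdpos i
  have hδle : ∀ i, δ ≤ d i := fun i => Finset.inf'_le _ (Finset.mem_univ i)
  have hEb : ∀ a b : Fin n, ∀ τ : ℝ, 0 ≤ τ →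
      ‖(NormedSpace.exp (-(τ • M))) a b‖ ≤
        (∑ i, ‖U a i‖ * ‖U b i‖) * Real.exp (-(δ * τ)) := by
    intro a b τ hτ
    rw [hEntry a b τ]
    refine le_trans (norm_sum_le _ _) ?_
    rw [Finset.sum_mul]
    refine Finset.sum_le_sum fun i _ => ?_
    rw [norm_mul, norm_mul, Complex.norm_conj, Complex.norm_exp, Complex.ofReal_re]
    have hexple : Real.exp (-(τ * d i)) ≤ Real.exp (-(δ * τ)) := by
      apply Real.exp_le_exp.mpr
      nlinarith [hδle i, hτ]
    calc ‖U a i‖ * Real.exp (-(τ * d i)) * ‖U b i‖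
        ≤ ‖U a i‖ * Real.exp (-(δ * τ)) * ‖U b i‖ :=
          mul_le_mul_of_nonneg_right
            (mul_le_mul_of_nonneg_left hexple (norm_nonneg _))
            (norm_nonneg _)
      _ = ‖U a i‖ * ‖U b i‖ * Real.exp (-(δ * τ)) := by ring
  have hEcont : ∀ a b : Fin n,
      Continuous fun τ : ℝ => (NormedSpace.exp (-(τ • M))) a b := by
    intro a b
    have hfun : (fun τ : ℝ => (NormedSpace.exp (-(τ • M))) a b) =
        fun τ => ∑ i, U a i * Complex.exp ((-(τ * d i) : ℝ) : ℂ) * (starRingEnd ℂ) (U b i) :=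
      funext fun τ => hEntry a b τ
    rw [hfun]
    refine continuous_finset_sum _ fun i _ => ?_
    refine (continuous_const.mul ?_).mul continuous_const
    exact Complex.continuous_exp.comp (Complex.continuous_ofReal.comp (by fun_prop))
  have hmeas : ∀ a b : Fin n, AEStronglyMeasurable
      (fun τ : ℝ => ‖(NormedSpace.exp (-(τ • M))) a b‖ * τ ^ (-(1/4) : ℝ))
      (volume.restrict (Set.Ioi 0)) := by
    intro a b
    have hr : AEStronglyMeasurable (fun τ : ℝ => τ ^ (-(1/4) : ℝ))
        (volume.restrict (Set.Ioi 0)) := by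
      refine ContinuousOn.aestronglyMeasurable ?_ measurableSet_Ioi
      exact continuousOn_of_forall_continuousAt fun x hx =>
        Real.continuousAt_rpow_const x _ (Or.inl (ne_of_gt hx))
    exact ((continuous_norm.comp (hEcont a b)).aestronglyMeasurable).mul hr
  have hsqint : ∀ a b : Fin n, Integrable
      (fun τ : ℝ => (‖(NormedSpace.exp (-(τ • M))) a b‖ * τ ^ (-(1/4) : ℝ)) ^ 2)
      (volume.restrict (Set.Ioi 0)) := by
    intro a b
    have hC0 : (0:ℝ) ≤ ∑ i, ‖U a i‖ * ‖U b i‖ :=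
      Finset.sum_nonneg fun i _ => mul_nonneg (norm_nonneg _) (norm_nonneg _)
    have hg : Integrable (fun τ : ℝ => (∑ i, ‖U a i‖ * ‖U b i‖) ^ 2 *
        (τ ^ (-(1/2) : ℝ) * Real.exp (-(2 * δ * τ)))) (volume.restrict (Set.Ioi 0)) :=
      (InvSqrtAux.integrableOn_aux (by positivity : (0:ℝ) < 2 * δ)).const_mul _
    refine hg.mono' ?_ ?_
    · have := (hmeas a b).mul (hmeas a b)
      simpa [← pow_two, Pi.pow_def] using this
    · rw [ae_restrict_iff' measurableSet_Ioi]
      refine ae_of_all _ fun τ hτ => ?_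
      have hτ0 : (0:ℝ) < τ := hτ
      rw [Real.norm_eq_abs, abs_of_nonneg (sq_nonneg _)]
      have h1 := hEb a b τ hτ0.le
      have hq : (τ ^ (-(1/4) : ℝ)) ^ 2 = τ ^ (-(1/2) : ℝ) := by
        rw [pow_two, ← Real.rpow_add hτ0]
        norm_num
      have hexp2 : Real.exp (-(δ * τ)) ^ 2 = Real.exp (-(2 * δ * τ)) := by
        rw [pow_two, ← Real.exp_add]
        congr 1
        ring
      have habs2 : ‖(NormedSpace.exp (-(τ • M))) a b‖ ^ 2 ≤
          ((∑ i, ‖U a i‖ * ‖U b i‖) * Real.exp (-(δ * τ))) ^ 2 :=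
        pow_le_pow_left₀ (norm_nonneg _) h1 2
      calc (‖(NormedSpace.exp (-(τ • M))) a b‖ * τ ^ (-(1/4) : ℝ)) ^ 2
          = ‖(NormedSpace.exp (-(τ • M))) a b‖ ^ 2 * (τ ^ (-(1/4) : ℝ)) ^ 2 := by
            ring
        _ ≤ ((∑ i, ‖U a i‖ * ‖U b i‖) * Real.exp (-(δ * τ))) ^ 2 *
              (τ ^ (-(1/4) : ℝ)) ^ 2 :=
            mul_le_mul_of_nonneg_right habs2 (sq_nonneg _)
        _ = (∑ i, ‖U a i‖ * ‖U b i‖) ^ 2 *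
              (τ ^ (-(1/2) : ℝ) * Real.exp (-(2 * δ * τ))) := by
            rw [mul_pow, hexp2, hq]
            ring
  have hnn : ∀ a b : Fin n, (0 : ℝ → ℝ) ≤ᵐ[volume.restrict (Set.Ioi 0)]
      fun τ : ℝ => ‖(NormedSpace.exp (-(τ • M))) a b‖ * τ ^ (-(1/4) : ℝ) := by
    intro a b
    filter_upwards [ae_restrict_mem measurableSet_Ioi] with τ hτ
    exact mul_nonneg (norm_nonneg _) (Real.rpow_nonneg (le_of_lt hτ) _)
  have hmem : ∀ a b : Fin n, MemLp
      (fun τ : ℝ => ‖(NormedSpace.exp (-(τ • M))) a b‖ * τ ^ (-(1/4) : ℝ))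
      (ENNReal.ofReal 2) (volume.restrict (Set.Ioi 0)) := by
    intro a b
    have h2 : ENNReal.ofReal (2:ℝ) = 2 := by
      simp
    rw [h2, memLp_two_iff_integrable_sq (hmeas a b)]
    exact hsqint a b
  have hCS := integral_mul_le_Lp_mul_Lq_of_nonneg (μ := volume.restrict (Set.Ioi 0))
    Real.HolderConjugate.two_two
    (hnn k.1 t.1) (hnn k.2 t.2) (hmem k.1 t.1) (hmem k.2 t.2)
  have hnormle : ‖∫ τ in Set.Ioi (0:ℝ), ((τ ^ (-(1/2) : ℝ) : ℝ) : ℂ) *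
      ((NormedSpace.exp (-(τ • M))) k.1 t.1 * (NormedSpace.exp (-(τ • M))) k.2 t.2)‖ ≤
      ∫ τ in Set.Ioi (0:ℝ),
        (‖(NormedSpace.exp (-(τ • M))) k.1 t.1‖ * τ ^ (-(1/4) : ℝ)) *
        (‖(NormedSpace.exp (-(τ • M))) k.2 t.2‖ * τ ^ (-(1/4) : ℝ)) := by
    refine le_trans (norm_integral_le_integral_norm _) (le_of_eq ?_)
    refine setIntegral_congr_fun measurableSet_Ioi fun τ hτ => ?_
    have hτ0 : (0:ℝ) < τ := hτ
    have hq : τ ^ (-(1/4) : ℝ) * τ ^ (-(1/4) : ℝ) = τ ^ (-(1/2) : ℝ) := by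
      rw [← Real.rpow_add hτ0]
      norm_num
    rw [norm_mul, norm_mul, Complex.norm_real, Real.norm_eq_abs,
      abs_of_nonneg (Real.rpow_nonneg hτ0.le _),
      ← hq]
    ring
  have hIeq : ∀ a b : Fin n, (∫ τ in Set.Ioi (0:ℝ),
      (‖(NormedSpace.exp (-(τ • M))) a b‖ * τ ^ (-(1/4) : ℝ)) ^ (2:ℝ))
      = ∫ τ in Set.Ioi (0:ℝ),
        ‖(NormedSpace.exp (-(τ • M))) a b‖ ^ 2 * τ ^ (-(1/2) : ℝ) := by
    intro a b
    refine setIntegral_congr_fun measurableSet_Ioi fun τ hτ => ?_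
    have hτ0 : (0:ℝ) < τ := hτ
    have hq : (τ ^ (-(1/4) : ℝ)) ^ 2 = τ ^ (-(1/2) : ℝ) := by
      rw [pow_two, ← Real.rpow_add hτ0]
      norm_num
    have h2 : (‖(NormedSpace.exp (-(τ • M))) a b‖ * τ ^ (-(1/4) : ℝ)) ^ (2:ℝ)
        = (‖(NormedSpace.exp (-(τ • M))) a b‖ * τ ^ (-(1/4) : ℝ)) ^ (2:ℕ) := by
      rw [← Real.rpow_natCast]
      norm_num
    rw [h2, ← hq]
    ring
  -- final chain
  rw [show ‖(S⁻¹) k t‖ = (Real.sqrt Real.pi)⁻¹ *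
      ‖∫ τ in Set.Ioi (0:ℝ), ((τ ^ (-(1/2) : ℝ) : ℝ) : ℂ) *
        ((NormedSpace.exp (-(τ • M))) k.1 t.1 * (NormedSpace.exp (-(τ • M))) k.2 t.2)‖
    from by rw [hkey, norm_mul, norm_inv, Complex.norm_real, Real.norm_eq_abs,
      abs_of_nonneg (Real.sqrt_nonneg _)]]
  rw [show (1:ℝ) / Real.sqrt Real.pi = (Real.sqrt Real.pi)⁻¹ from one_div _, mul_assoc]
  refine mul_le_mul_of_nonneg_left ?_ (inv_nonneg.mpr (Real.sqrt_nonneg _))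
  refine le_trans hnormle (le_trans hCS ?_)
  rw [hIeq k.1 t.1, hIeq k.2 t.2, ← Real.sqrt_eq_rpow, ← Real.sqrt_eq_rpow]
end
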